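/- arXiv:2510.25592 — 5 statements merged into one kernel-verified Lean document; each statement's English description precedes it below -/
import Mathlib

section
/- For integers n ≥ b ≥ 2 and D ≥ 1, the number of unordered pairs {i,j} of distinct points of [n]^D with max_t |i_t - j_t| ≤ b-1, plus n^D single points, plus 1, equals 1 + n^D + ((2nb - n - b² + b)^D - n^D)/2. Equivalently, the number of 2-weight-limited b-bursts in the L_∞ model on [n]^D is 1 + n^D + ((n(2b-1) - b(b-1))^D - n^D)/2. -/
open Finset

lemma count1 (b : ℕ) (hb : 2 ≤ b) : ∀ n, b ≤ n →
    ((Finset.range n ×ˢ Finset.range n).filter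
      (fun p : ℕ × ℕ => p.1 < p.2 + b ∧ p.2 < p.1 + b)).card + b * b + n = 2 * n * b + b := by
  refine Nat.le_induction ?_ ?_
  · have : (Finset.range b ×ˢ Finset.range b).filter
      (fun p : ℕ × ℕ => p.1 < p.2 + b ∧ p.2 < p.1 + b) = Finset.range b ×ˢ Finset.range b := by
      apply Finset.filter_true_of_mem
      rintro ⟨x, y⟩ hm
      simp only [Finset.mem_product, Finset.mem_range] at hm
      omega
    rw [this, Finset.card_product, Finset.card_range]
    ring
  · intro n hn ih
    set P : ℕ × ℕ → Prop := fun p => p.1 < p.2 + b ∧ p.2 < p.1 + b with hP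
    have hsplit : Finset.range (n+1) ×ˢ Finset.range (n+1)
        = (Finset.range n ×ˢ Finset.range n) ∪
          ((Finset.range (n+1)).image (fun y => (n, y)) ∪
           (Finset.range n).image (fun x => (x, n))) := by
      ext ⟨x, y⟩
      simp only [Finset.mem_product, Finset.mem_union, Finset.mem_image, Finset.mem_range,
        Prod.mk.injEq]
      constructor
      · rintro ⟨hx, hy⟩
        by_cases h1 : x = n
        · exact Or.inr (Or.inl ⟨y, by omega, by omega, rfl⟩)
        · by_cases h2 : y = n
          · exact Or.inr (Or.inr ⟨x, by omega, rfl, by omega⟩)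
          · exact Or.inl ⟨by omega, by omega⟩
      · rintro (⟨hx, hy⟩ | ⟨z, hz, rfl, rfl⟩ | ⟨z, hz, rfl, rfl⟩) <;> omega
    rw [hsplit, Finset.filter_union, Finset.filter_union]
    have inj1 : Function.Injective (fun y : ℕ => (n, y)) := fun a c h => by
      simpa using h
    have inj2 : Function.Injective (fun x : ℕ => (x, n)) := fun a c h => by
      simpa using h
    have c1 : (((Finset.range (n+1)).image (fun y => (n, y))).filter P).card = b := by
      rw [Finset.filter_image, Finset.card_image_of_injective _ inj1]
      have : (Finset.range (n+1)).filter (fun a => P (n, a)) = Finset.Ico (n+1-b) (n+1) := by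
        ext y
        simp only [Finset.mem_filter, Finset.mem_range, Finset.mem_Ico, hP]
        omega
      rw [this, Nat.card_Ico]
      omega
    have c2 : (((Finset.range n).image (fun x => (x, n))).filter P).card = b - 1 := by
      rw [Finset.filter_image, Finset.card_image_of_injective _ inj2]
      have : (Finset.range n).filter (fun a => P (a, n)) = Finset.Ico (n+1-b) n := by
        ext x
        simp only [Finset.mem_filter, Finset.mem_range, Finset.mem_Ico, hP]
        omega
      rw [this, Nat.card_Ico]
      omega
    have d12 : Disjoint (((Finset.range (n+1)).image (fun y => (n, y))).filter P)
        (((Finset.range n).image (fun x => (x, n))).filter P) := by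
      rw [Finset.disjoint_left]
      rintro ⟨x, y⟩ h1 h2
      simp only [Finset.mem_filter, Finset.mem_image, Finset.mem_range, Prod.mk.injEq] at h1 h2
      obtain ⟨⟨z, hz, rfl, rfl⟩, -⟩ := h1
      obtain ⟨⟨w, hw, h, rfl⟩, -⟩ := h2
      omega
    have d0 : Disjoint ((Finset.range n ×ˢ Finset.range n).filter P)
        ((((Finset.range (n+1)).image (fun y => (n, y))).filter P) ∪
         (((Finset.range n).image (fun x => (x, n))).filter P)) := by
      rw [Finset.disjoint_left]
      rintro ⟨x, y⟩ h1 h2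
      simp only [Finset.mem_filter, Finset.mem_product, Finset.mem_union, Finset.mem_image,
        Finset.mem_range, Prod.mk.injEq] at h1 h2
      rcases h2 with ⟨⟨z, hz, h, rfl⟩, -⟩ | ⟨⟨z, hz, rfl, h⟩, -⟩ <;> omega
    have ih' : ((Finset.range n ×ˢ Finset.range n).filter P).card + b * b + n = 2*n*b + b := ih
    rw [Finset.card_union_of_disjoint d0, Finset.card_union_of_disjoint d12, c1, c2]
    have : 2*(n+1)*b = 2*n*b + 2*b := by ring
    omega

lemma count2 (n b : ℕ) (hb : 2 ≤ b) (hn : b ≤ n) :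
    Fintype.card {q : Fin n × Fin n // |((q.1 : ℕ) : ℤ) - ((q.2 : ℕ) : ℤ)| ≤ (b : ℤ) - 1}
      + b * b + n = 2 * n * b + b := by
  have h1 : Fintype.card {q : Fin n × Fin n // |((q.1 : ℕ) : ℤ) - ((q.2 : ℕ) : ℤ)| ≤ (b : ℤ) - 1}
      = (Finset.univ.filter (fun q : Fin n × Fin n =>
          |((q.1 : ℕ) : ℤ) - ((q.2 : ℕ) : ℤ)| ≤ (b : ℤ) - 1)).card := by
    rw [Fintype.card_subtype]
  rw [h1]
  have h2 : (Finset.univ.filter (fun q : Fin n × Fin n =>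
          |((q.1 : ℕ) : ℤ) - ((q.2 : ℕ) : ℤ)| ≤ (b : ℤ) - 1)).card
      = ((Finset.range n ×ˢ Finset.range n).filter
          (fun p : ℕ × ℕ => p.1 < p.2 + b ∧ p.2 < p.1 + b)).card := by
    apply Finset.card_bij (fun q _ => ((q.1 : ℕ), (q.2 : ℕ)))
    · rintro ⟨x, y⟩ h
      simp only [Finset.mem_filter, Finset.mem_univ, true_and] at h
      simp only [Finset.mem_filter, Finset.mem_product, Finset.mem_range]
      refine ⟨⟨x.2, y.2⟩, ?_⟩
      rw [abs_le] at h
      omega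
    · rintro ⟨x, y⟩ - ⟨x', y'⟩ - h
      simp only [Prod.mk.injEq] at h
      ext <;> simp [h.1, h.2]
    · rintro ⟨x, y⟩ h
      simp only [Finset.mem_filter, Finset.mem_product, Finset.mem_range] at h
      refine ⟨(⟨x, h.1.1⟩, ⟨y, h.1.2⟩), ?_, rfl⟩
      simp only [Finset.mem_filter, Finset.mem_univ, true_and]
      rw [abs_le]
      omega
  rw [h2]
  exact count1 b hb n hn

lemma count3 (n b D : ℕ) :
    Fintype.card {p : (Fin D → Fin n) × (Fin D → Fin n) //
        ∀ t, |((p.1 t : ℕ) : ℤ) - ((p.2 t : ℕ) : ℤ)| ≤ (b : ℤ) - 1}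
      = (Fintype.card {q : Fin n × Fin n // |((q.1 : ℕ) : ℤ) - ((q.2 : ℕ) : ℤ)| ≤ (b : ℤ) - 1}) ^ D := by
  have e1 : {p : (Fin D → Fin n) × (Fin D → Fin n) //
        ∀ t, |((p.1 t : ℕ) : ℤ) - ((p.2 t : ℕ) : ℤ)| ≤ (b : ℤ) - 1}
      ≃ ∀ _ : Fin D, {q : Fin n × Fin n // |((q.1 : ℕ) : ℤ) - ((q.2 : ℕ) : ℤ)| ≤ (b : ℤ) - 1} :=
    { toFun := fun p t => ⟨(p.1.1 t, p.1.2 t), p.2 t⟩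
      invFun := fun h => ⟨(fun t => (h t).1.1, fun t => (h t).1.2), fun t => (h t).2⟩
      left_inv := fun p => rfl
      right_inv := fun h => rfl }
  rw [Fintype.card_congr e1, Fintype.card_pi]
  simp

variable {n b D : ℕ}

abbrev V (n D : ℕ) := Fin D → Fin n

def Cnd {n D : ℕ} (b : ℕ) (i j : V n D) : Prop :=
  ∀ t, |((i t : ℕ) : ℤ) - ((j t : ℕ) : ℤ)| ≤ (b : ℤ) - 1

instance {n D b : ℕ} (i j : V n D) : Decidable (Cnd b i j) := by unfold Cnd; infer_instance

lemma cnd_refl (hb : 1 ≤ b) (i : V n D) : Cnd b i i := fun t => by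
  simp only [sub_self, abs_zero]; omega

lemma cnd_symm {i j : V n D} (h : Cnd b i j) : Cnd b j i := fun t => by
  rw [abs_sub_comm]; exact h t

lemma count4 (hb : 2 ≤ b) :
    2 * Nat.card {s : Finset (V n D) | s.card = 2 ∧
        ∀ i ∈ s, ∀ j ∈ s, ∀ t, |((i t : ℕ) : ℤ) - ((j t : ℕ) : ℤ)| ≤ (b : ℤ) - 1}
      + n ^ D
      = Fintype.card {p : (Fin D → Fin n) × (Fin D → Fin n) //
          ∀ t, |((p.1 t : ℕ) : ℤ) - ((p.2 t : ℕ) : ℤ)| ≤ (b : ℤ) - 1} := by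
  classical
  have hb1 : 1 ≤ b := le_trans one_le_two hb
  have hcard : Nat.card {s : Finset (V n D) | s.card = 2 ∧
        ∀ i ∈ s, ∀ j ∈ s, ∀ t, |((i t : ℕ) : ℤ) - ((j t : ℕ) : ℤ)| ≤ (b : ℤ) - 1}
      = (Finset.univ.filter (fun s : Finset (V n D) => s.card = 2 ∧
          ∀ i ∈ s, ∀ j ∈ s, Cnd b i j)).card := by
    rw [Nat.card_eq_fintype_card]
    rw [Fintype.card_subtype]
    congr 1
  rw [hcard, Fintype.card_subtype]
  set U := Finset.univ.filter (fun s : Finset (V n D) => s.card = 2 ∧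
          ∀ i ∈ s, ∀ j ∈ s, Cnd b i j) with hU
  set F := Finset.univ.filter (fun p : V n D × V n D => Cnd b p.1 p.2) with hF
  -- split F into diagonal and off-diagonal
  have hsplit : F = (Finset.univ.filter (fun p : V n D × V n D => p.1 = p.2 ∧ Cnd b p.1 p.2))
      ∪ (Finset.univ.filter (fun p : V n D × V n D => p.1 ≠ p.2 ∧ Cnd b p.1 p.2)) := by
    rw [hF, ← Finset.filter_or]
    apply Finset.filter_congr
    intro p _
    by_cases h : p.1 = p.2 <;> simp [h]
  have hdisj : Disjoint
      (Finset.univ.filter (fun p : V n D × V n D => p.1 = p.2 ∧ Cnd b p.1 p.2))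
      (Finset.univ.filter (fun p : V n D × V n D => p.1 ≠ p.2 ∧ Cnd b p.1 p.2)) := by
    rw [Finset.disjoint_left]
    intro p h1 h2
    simp only [Finset.mem_filter] at h1 h2
    exact h2.2.1 h1.2.1
  have hdiag : (Finset.univ.filter (fun p : V n D × V n D => p.1 = p.2 ∧ Cnd b p.1 p.2)).card
      = n ^ D := by
    have : Finset.univ.filter (fun p : V n D × V n D => p.1 = p.2 ∧ Cnd b p.1 p.2)
        = Finset.univ.image (fun v : V n D => (v, v)) := by
      ext ⟨x, y⟩
      simp only [Finset.mem_filter, Finset.mem_univ, true_and, Finset.mem_image, Prod.mk.injEq]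
      constructor
      · rintro ⟨rfl, -⟩; exact ⟨x, rfl, rfl⟩
      · rintro ⟨v, h1, h2⟩
        subst h1; subst h2
        exact ⟨rfl, cnd_refl hb1 v⟩
    rw [this, Finset.card_image_of_injective _ (fun a c h => congrArg Prod.fst h)]
    simp [Fintype.card_fun]
  have hoff : (Finset.univ.filter (fun p : V n D × V n D => p.1 ≠ p.2 ∧ Cnd b p.1 p.2)).card
      = 2 * U.card := by
    set T := Finset.univ.filter (fun p : V n D × V n D => p.1 ≠ p.2 ∧ Cnd b p.1 p.2) with hT
    have hmaps : ∀ p ∈ T, ({p.1, p.2} : Finset (V n D)) ∈ U := by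
      rintro ⟨x, y⟩ hp
      simp only [hT, Finset.mem_filter, Finset.mem_univ, true_and] at hp
      simp only [hU, Finset.mem_filter, Finset.mem_univ, true_and]
      refine ⟨Finset.card_pair hp.1, ?_⟩
      intro i hi j hj
      simp only [Finset.mem_insert, Finset.mem_singleton] at hi hj
      rcases hi with hi | hi <;> rcases hj with hj | hj <;> subst hi <;> subst hj
      · exact cnd_refl hb1 _
      · exact hp.2
      · exact cnd_symm hp.2
      · exact cnd_refl hb1 _
    rw [Finset.card_eq_sum_card_fiberwise hmaps]
    have hfib : ∀ u ∈ U, (T.filter (fun p => ({p.1, p.2} : Finset (V n D)) = u)).card = 2 := by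
      intro u hu
      simp only [hU, Finset.mem_filter, Finset.mem_univ, true_and] at hu
      obtain ⟨a, c, hac, rfl⟩ := Finset.card_eq_two.mp hu.1
      have hC : Cnd b a c := hu.2 a (by simp) c (by simp)
      have : T.filter (fun p => ({p.1, p.2} : Finset (V n D)) = {a, c}) = {(a, c), (c, a)} := by
        ext ⟨x, y⟩
        simp only [Finset.mem_filter, hT, Finset.mem_univ, true_and, Finset.mem_insert,
          Finset.mem_singleton, Prod.mk.injEq]
        constructor
        · rintro ⟨⟨hxy, -⟩, heq⟩
          have hx : x ∈ ({a, c} : Finset (V n D)) := by rw [← heq]; simp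
          have hy : y ∈ ({a, c} : Finset (V n D)) := by rw [← heq]; simp
          simp only [Finset.mem_insert, Finset.mem_singleton] at hx hy
          rcases hx with rfl | rfl <;> rcases hy with rfl | rfl
          · exact absurd rfl hxy
          · exact Or.inl ⟨rfl, rfl⟩
          · exact Or.inr ⟨rfl, rfl⟩
          · exact absurd rfl hxy
        · rintro (⟨rfl, rfl⟩ | ⟨rfl, rfl⟩)
          · exact ⟨⟨hac, hC⟩, rfl⟩
          · exact ⟨⟨Ne.symm hac, cnd_symm hC⟩, by rw [Finset.pair_comm]⟩
      rw [this, Finset.card_insert_of_notMem (by simp [Prod.ext_iff, hac]), Finset.card_singleton]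
    rw [Finset.sum_congr rfl hfib, Finset.sum_const, smul_eq_mul, mul_comm]
  have hfinal : Finset.univ.filter (fun x : V n D × V n D =>
      ∀ t, |((x.1 t : ℕ) : ℤ) - ((x.2 t : ℕ) : ℤ)| ≤ (b : ℤ) - 1) = F := by
    rw [hF]
    exact Finset.filter_congr (fun x _ => Iff.rfl)
  rw [hfinal, hsplit, Finset.card_union_of_disjoint hdisj, hdiag, hoff]
  ring

lemma count5 (hb : 2 ≤ b) :
    Nat.card {e : (Fin D → Fin n) → ZMod 2 |
        (Finset.univ.filter (fun i => e i ≠ 0)).card ≤ 2 ∧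
        ∀ i ∈ Finset.univ.filter (fun i => e i ≠ 0),
          ∀ j ∈ Finset.univ.filter (fun i => e i ≠ 0),
            ∀ t, |((i t : ℕ) : ℤ) - ((j t : ℕ) : ℤ)| < (b : ℤ)}
      = 1 + n ^ D + Nat.card {s : Finset (V n D) | s.card = 2 ∧
          ∀ i ∈ s, ∀ j ∈ s, ∀ t, |((i t : ℕ) : ℤ) - ((j t : ℕ) : ℤ)| ≤ (b : ℤ) - 1} := by
  classical
  have hb1 : 1 ≤ b := le_trans one_le_two hb
  have hone : ∀ x : ZMod 2, x ≠ 0 → x = 1 := by decide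
  have hlt : ∀ x : ℤ, (x < (b : ℤ)) ↔ (x ≤ (b : ℤ) - 1) := fun x => by omega
  -- equivalence with finsets of card ≤ 2 satisfying Cnd
  have hequiv : {e : (Fin D → Fin n) → ZMod 2 |
        (Finset.univ.filter (fun i => e i ≠ 0)).card ≤ 2 ∧
        ∀ i ∈ Finset.univ.filter (fun i => e i ≠ 0),
          ∀ j ∈ Finset.univ.filter (fun i => e i ≠ 0),
            ∀ t, |((i t : ℕ) : ℤ) - ((j t : ℕ) : ℤ)| < (b : ℤ)}
      ≃ {s : Finset (V n D) | s.card ≤ 2 ∧ ∀ i ∈ s, ∀ j ∈ s, Cnd b i j} := by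
    refine
      { toFun := fun e => ⟨Finset.univ.filter (fun i => e.1 i ≠ 0), e.2.1, fun i hi j hj t => ?_⟩
        invFun := fun s => ⟨fun i => if i ∈ s.1 then 1 else 0, ?_⟩
        left_inv := ?_
        right_inv := ?_ }
    · exact (hlt _).mp (e.2.2 i hi j hj t)
    · have hfil : Finset.univ.filter
          (fun i => (if i ∈ s.1 then (1 : ZMod 2) else 0) ≠ 0) = s.1 := by
        ext i
        by_cases h : i ∈ s.1 <;> simp [h]
      rw [Set.mem_setOf_eq, hfil]
      exact ⟨s.2.1, fun i hi j hj t => (hlt _).mpr (s.2.2 i hi j hj t)⟩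
    · rintro ⟨e, he⟩
      ext i
      simp only
      by_cases h : e i = 0 <;> simp [h, hone _]
    · rintro ⟨s, hs⟩
      ext i
      simp only
      by_cases h : i ∈ s <;> simp [h]
  rw [Nat.card_congr hequiv]
  clear hlt hone hequiv
  have h1 : Nat.card {s : Finset (V n D) | s.card ≤ 2 ∧ ∀ i ∈ s, ∀ j ∈ s, Cnd b i j}
      = (Finset.univ.filter (fun s : Finset (V n D) =>
          s.card ≤ 2 ∧ ∀ i ∈ s, ∀ j ∈ s, Cnd b i j)).card := by
    rw [Nat.card_eq_fintype_card, Fintype.card_subtype]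
    congr 1
  have h2 : Nat.card {s : Finset (V n D) | s.card = 2 ∧
        ∀ i ∈ s, ∀ j ∈ s, ∀ t, |((i t : ℕ) : ℤ) - ((j t : ℕ) : ℤ)| ≤ (b : ℤ) - 1}
      = (Finset.univ.filter (fun s : Finset (V n D) =>
          s.card = 2 ∧ ∀ i ∈ s, ∀ j ∈ s, Cnd b i j)).card := by
    rw [Nat.card_eq_fintype_card, Fintype.card_subtype]
    congr 1
  rw [h1, h2]
  -- split the ≤ 2 filter
  have hsplit : Finset.univ.filter (fun s : Finset (V n D) =>
        s.card ≤ 2 ∧ ∀ i ∈ s, ∀ j ∈ s, Cnd b i j)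
      = (Finset.univ.filter (fun s : Finset (V n D) => s.card ≤ 1))
        ∪ (Finset.univ.filter (fun s : Finset (V n D) =>
            s.card = 2 ∧ ∀ i ∈ s, ∀ j ∈ s, Cnd b i j)) := by
    rw [← Finset.filter_or]
    apply Finset.filter_congr
    intro s _
    constructor
    · rintro ⟨hc, hcond⟩
      rcases Nat.lt_or_ge s.card 2 with h | h
      · exact Or.inl (Nat.lt_succ_iff.mp h)
      · exact Or.inr ⟨le_antisymm hc h, hcond⟩
    · rintro (h | ⟨h, hcond⟩)
      · refine ⟨h.trans one_le_two, fun i hi j hj => ?_⟩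
        have hij : i = j := Finset.card_le_one.mp h i hi j hj
        rw [hij]
        exact cnd_refl hb1 j
      · exact ⟨le_of_eq h, hcond⟩
  have hdisj : Disjoint (Finset.univ.filter (fun s : Finset (V n D) => s.card ≤ 1))
      (Finset.univ.filter (fun s : Finset (V n D) =>
          s.card = 2 ∧ ∀ i ∈ s, ∀ j ∈ s, Cnd b i j)) := by
    rw [Finset.disjoint_left]
    intro s h1' h2'
    simp only [Finset.mem_filter] at h1' h2'
    rw [h2'.2.1] at h1'
    exact absurd h1'.2 (by norm_num)
  have hsmall : (Finset.univ.filter (fun s : Finset (V n D) => s.card ≤ 1)).card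
      = 1 + n ^ D := by
    have : Finset.univ.filter (fun s : Finset (V n D) => s.card ≤ 1)
        = insert ∅ (Finset.univ.image (fun a : V n D => ({a} : Finset (V n D)))) := by
      ext s
      simp only [Finset.mem_filter, Finset.mem_univ, true_and, Finset.mem_insert,
        Finset.mem_image]
      constructor
      · intro h
        interval_cases h' : s.card
        · exact Or.inl (Finset.card_eq_zero.mp h')
        · obtain ⟨a, rfl⟩ := Finset.card_eq_one.mp h'
          exact Or.inr ⟨a, rfl⟩
      · rintro (rfl | ⟨a, rfl⟩) <;> simp
    rw [this, Finset.card_insert_of_notMem (by simp), Finset.card_image_of_injective _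
      (fun a c h => by simpa using h)]
    simp [Fintype.card_fun]
    ring
  rw [hsplit, Finset.card_union_of_disjoint hdisj, hsmall]

/-- For integers `n ≥ b ≥ 2` and `D ≥ 1`: the number of unordered pairs `{i,j}` of
distinct points of `[n]^D` with `max_t |i_t - j_t| ≤ b-1`, plus `n^D` single points,
plus `1`, equals `1 + n^D + ((n(2b-1) - b(b-1))^D - n^D)/2`.  Equivalently, the number
of 2-weight-limited `b`-bursts in the `L_∞` model on `[n]^D` (binary vectors of Hamming
weight at most 2 whose two support positions are within `L_∞` distance `< b`) equals
this same quantity. -/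
theorem stmt_3 (n b D : ℕ) (hb : 2 ≤ b) (hn : b ≤ n) (hD : 1 ≤ D) :
    (1 + (n : ℚ) ^ D +
        (Nat.card {s : Finset (Fin D → Fin n) | s.card = 2 ∧
          ∀ i ∈ s, ∀ j ∈ s, ∀ t, |((i t : ℕ) : ℤ) - ((j t : ℕ) : ℤ)| ≤ (b : ℤ) - 1} : ℚ)
      = 1 + (n : ℚ) ^ D + (((n : ℚ) * (2 * b - 1) - b * (b - 1)) ^ D - (n : ℚ) ^ D) / 2) ∧
    ((Nat.card {e : (Fin D → Fin n) → ZMod 2 |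
        (Finset.univ.filter (fun i => e i ≠ 0)).card ≤ 2 ∧
        ∀ i ∈ Finset.univ.filter (fun i => e i ≠ 0),
          ∀ j ∈ Finset.univ.filter (fun i => e i ≠ 0),
            ∀ t, |((i t : ℕ) : ℤ) - ((j t : ℕ) : ℤ)| < (b : ℤ)} : ℚ)
      = 1 + (n : ℚ) ^ D + (((n : ℚ) * (2 * b - 1) - b * (b - 1)) ^ D - (n : ℚ) ^ D) / 2) := by
  set c := Fintype.card {q : Fin n × Fin n // |((q.1 : ℕ) : ℤ) - ((q.2 : ℕ) : ℤ)| ≤ (b : ℤ) - 1}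
    with hcdef
  set K := Nat.card {s : Finset (Fin D → Fin n) | s.card = 2 ∧
          ∀ i ∈ s, ∀ j ∈ s, ∀ t, |((i t : ℕ) : ℤ) - ((j t : ℕ) : ℤ)| ≤ (b : ℤ) - 1} with hKdef
  have hc : c + b * b + n = 2 * n * b + b := count2 n b hb hn
  have h4 : 2 * K + n ^ D = c ^ D := by
    rw [hKdef, hcdef, ← count3 n b D]
    exact count4 hb
  have h5 : Nat.card {e : (Fin D → Fin n) → ZMod 2 |
        (Finset.univ.filter (fun i => e i ≠ 0)).card ≤ 2 ∧
        ∀ i ∈ Finset.univ.filter (fun i => e i ≠ 0),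
          ∀ j ∈ Finset.univ.filter (fun i => e i ≠ 0),
            ∀ t, |((i t : ℕ) : ℤ) - ((j t : ℕ) : ℤ)| < (b : ℤ)}
      = 1 + n ^ D + K := count5 hb
  have hcq : (c : ℚ) = (n : ℚ) * (2 * b - 1) - b * (b - 1) := by
    have h := congrArg (Nat.cast : ℕ → ℚ) hc
    push_cast at h
    linear_combination h
  have h4q : 2 * (K : ℚ) + (n : ℚ) ^ D = (c : ℚ) ^ D := by
    have h := congrArg (Nat.cast : ℕ → ℚ) h4
    push_cast at h
    linear_combination h
  constructor
  · rw [← hcq]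
    linear_combination h4q / 2
  · have h := congrArg (Nat.cast : ℕ → ℚ) h5
    push_cast at h
    rw [h, ← hcq]
    linear_combination h4q / 2
end

section
/- Let C ⊆ F_2^N be a linear code, with N = n^D, that corrects every 2-weight-limited b-burst in the L_∞ model, where n ≥ (2b-1)^{D-1} D(b²-b). Then the excess redundancy of C satisfies ξ(C) ≥ D·log₂(2b-1) - 2. -/
open Finset

private lemma pow_aux_stmt5 (c d : ℕ) : ∀ m : ℕ,
    (c + d) ^ (m + 1) ≤ c ^ (m + 1) + (m + 1) * d * (c + d) ^ m := by
  intro m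
  induction m with
  | zero => simp
  | succ m ih =>
    have h1 : c ^ (m + 1) ≤ (c + d) ^ (m + 1) := Nat.pow_le_pow_left (Nat.le_add_right _ _) _
    calc (c + d) ^ (m + 2) = (c + d) * (c + d) ^ (m + 1) := by ring
      _ ≤ (c + d) * (c ^ (m + 1) + (m + 1) * d * (c + d) ^ m) := Nat.mul_le_mul_left _ ih
      _ = c ^ (m + 2) + d * c ^ (m + 1) + (m + 1) * d * (c + d) ^ (m + 1) := by ring
      _ ≤ c ^ (m + 2) + d * (c + d) ^ (m + 1) + (m + 1) * d * (c + d) ^ (m + 1) := by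
          have h2 := Nat.mul_le_mul_left d h1
          linarith
      _ = c ^ (m + 2) + (m + 2) * d * (c + d) ^ (m + 1) := by ring

private lemma oneD_stmt5 (n b : ℕ) (hb : 2 ≤ b) (hbn : b ≤ n) :
    n * (2 * b - 1) ≤ (Finset.univ.filter (fun p : Fin n × Fin n =>
      |((p.1 : ℕ) : ℤ) - ((p.2 : ℕ) : ℤ)| < (b : ℤ))).card + b * (b - 1) := by
  classical
  have hn0 : 0 < n := by omega
  set q : Finset (Fin n × Fin n) := Finset.univ.filter (fun p : Fin n × Fin n =>
      |((p.1 : ℕ) : ℤ) - ((p.2 : ℕ) : ℤ)| < (b : ℤ)) with hq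
  have hfib : q.card = ∑ x : Fin n, (q.filter fun p => p.1 = x).card :=
    Finset.card_eq_sum_card_fiberwise (fun p _ => Finset.mem_univ _)
  have hx : ∀ x : Fin n, min ((x : ℕ) + b) n - ((x : ℕ) + 1 - b)
      ≤ (q.filter fun p => p.1 = x).card := by
    intro x
    have hcard := Finset.card_le_card_of_injOn
      (f := fun m : ℕ => ((x, ⟨m % n, Nat.mod_lt _ hn0⟩) : Fin n × Fin n))
      (s := Finset.Ico ((x : ℕ) + 1 - b) (min ((x : ℕ) + b) n))
      (t := q.filter fun p => p.1 = x) ?_ ?_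
    · simpa [Nat.card_Ico] using hcard
    · intro m hm
      rw [Finset.mem_coe, Finset.mem_Ico] at hm
      have hmn : m < n := lt_of_lt_of_le hm.2 (min_le_right _ _)
      have hmod : m % n = m := Nat.mod_eq_of_lt hmn
      rw [Finset.mem_coe, Finset.mem_filter, hq, Finset.mem_filter]
      refine ⟨⟨Finset.mem_univ _, ?_⟩, rfl⟩
      simp only [Fin.val_mk, hmod, abs_lt]
      omega
    · intro m₁ h₁ m₂ h₂ h
      simp only [Finset.coe_Ico, Set.mem_Ico] at h₁ h₂
      have e := congrArg (fun p : Fin n × Fin n => (p.2 : ℕ)) h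
      simp only [Fin.val_mk] at e
      have l1 : m₁ < n := lt_of_lt_of_le h₁.2 (min_le_right _ _)
      have l2 : m₂ < n := lt_of_lt_of_le h₂.2 (min_le_right _ _)
      rwa [Nat.mod_eq_of_lt l1, Nat.mod_eq_of_lt l2] at e
  have hsum : (∑ x ∈ Finset.range n, (min (x + b) n - (x + 1 - b))) ≤ q.card := by
    rw [hfib, ← Fin.sum_univ_eq_sum_range (fun x => min (x + b) n - (x + 1 - b)) n]
    exact Finset.sum_le_sum fun x _ => hx x
  have hU : (∑ x ∈ Finset.range n, (b - 1 - x)) * 2 = b * (b - 1) := by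
    have h1 : ∑ x ∈ Finset.range n, (b - 1 - x) = ∑ x ∈ Finset.range (b - 1), (b - 1 - x) :=
      (Finset.sum_subset (Finset.range_subset_range.2 (by omega)) (fun x _ hx => by
        simp only [Finset.mem_range] at hx ⊢; omega)).symm
    have h2 : ∑ x ∈ Finset.range (b - 1), (b - 1 - x)
        = ∑ x ∈ Finset.range (b - 1), (x + 1) := by
      rw [← Finset.sum_range_reflect (fun x => x + 1) (b - 1)]
      exact Finset.sum_congr rfl fun x hx => by
        simp only [Finset.mem_range] at hx; omega
    have h3 : ∑ x ∈ Finset.range (b - 1), (x + 1) = ∑ x ∈ Finset.range b, x := by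
      have hb' : b - 1 + 1 = b := by omega
      rw [← hb', Finset.sum_range_succ' (fun x => x) (b - 1)]
      simp
    rw [h1, h2, h3]
    exact Finset.sum_range_id_mul_two b
  have hV : ∑ x ∈ Finset.range n, (x + b - n) = ∑ x ∈ Finset.range n, (b - 1 - x) := by
    rw [← Finset.sum_range_reflect (fun x => x + b - n) n]
    exact Finset.sum_congr rfl fun x hx => by
      simp only [Finset.mem_range] at hx; omega
  have hsplit : ∑ x ∈ Finset.range n,
      ((min (x + b) n - (x + 1 - b)) + ((b - 1 - x) + (x + b - n)))
      = (∑ x ∈ Finset.range n, (min (x + b) n - (x + 1 - b)))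
        + ((∑ x ∈ Finset.range n, (b - 1 - x)) + (∑ x ∈ Finset.range n, (x + b - n))) := by
    rw [Finset.sum_add_distrib, Finset.sum_add_distrib]
  have hmain : n * (2 * b - 1) ≤ ∑ x ∈ Finset.range n,
      ((min (x + b) n - (x + 1 - b)) + ((b - 1 - x) + (x + b - n))) := by
    calc n * (2 * b - 1) = ∑ _x ∈ Finset.range n, (2 * b - 1) := by
          rw [Finset.sum_const, Finset.card_range, smul_eq_mul]
      _ ≤ _ := Finset.sum_le_sum fun x hx => by
          simp only [Finset.mem_range] at hx; omega
  rw [hsplit] at hmain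
  linarith [hsum, hU, hV, hmain]

/-- Let `C ⊆ F_2^N` be a linear code, `N = n^D`, that corrects every 2-weight-limited
`b`-burst in the `L_∞` model (all such error vectors lie in distinct cosets of `C`),
where `n ≥ (2b-1)^{D-1} D (b²-b)`.  Then the excess redundancy
`ξ(C) = (N - dim C) - ⌈log₂ N⌉` satisfies `ξ(C) ≥ D log₂(2b-1) - 2`. -/
theorem stmt_5 (n b D : ℕ) (hb : 2 ≤ b) (hD : 1 ≤ D) (hbn : b ≤ n)
    (hn : (2 * b - 1) ^ (D - 1) * D * (b ^ 2 - b) ≤ n)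
    (C : Submodule (ZMod 2) ((Fin D → Fin n) → ZMod 2))
    (hcorr : ∀ e₁ ∈ {e : (Fin D → Fin n) → ZMod 2 |
        (Finset.univ.filter (fun i => e i ≠ 0)).card ≤ 2 ∧
        ∀ i ∈ Finset.univ.filter (fun i => e i ≠ 0),
          ∀ j ∈ Finset.univ.filter (fun i => e i ≠ 0),
            ∀ t, |((i t : ℕ) : ℤ) - ((j t : ℕ) : ℤ)| < (b : ℤ)},
      ∀ e₂ ∈ {e : (Fin D → Fin n) → ZMod 2 |
        (Finset.univ.filter (fun i => e i ≠ 0)).card ≤ 2 ∧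
        ∀ i ∈ Finset.univ.filter (fun i => e i ≠ 0),
          ∀ j ∈ Finset.univ.filter (fun i => e i ≠ 0),
            ∀ t, |((i t : ℕ) : ℤ) - ((j t : ℕ) : ℤ)| < (b : ℤ)},
        e₁ ≠ e₂ → e₁ - e₂ ∉ C) :
    ((n : ℝ) ^ D - Module.finrank (ZMod 2) C) - (⌈Real.logb 2 ((n : ℝ) ^ D)⌉ : ℝ)
      ≥ D * Real.logb 2 (2 * (b : ℝ) - 1) - 2 := by
  classical
  have hn0 : 0 < n := by omega
  set S : Set ((Fin D → Fin n) → ZMod 2) := {e : (Fin D → Fin n) → ZMod 2 |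
      (Finset.univ.filter (fun i => e i ≠ 0)).card ≤ 2 ∧
      ∀ i ∈ Finset.univ.filter (fun i => e i ≠ 0),
        ∀ j ∈ Finset.univ.filter (fun i => e i ≠ 0),
          ∀ t, |((i t : ℕ) : ℤ) - ((j t : ℕ) : ℤ)| < (b : ℤ)} with hS
  set k := Module.finrank (ZMod 2) C with hk
  have hNcard : Fintype.card (Fin D → Fin n) = n ^ D := by
    rw [Fintype.card_fun, Fintype.card_fin, Fintype.card_fin]
  set EF := Finset.univ.filter (fun e : (Fin D → Fin n) → ZMod 2 => e ∈ S) with hEF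
  have hone : (1 : ZMod 2) ≠ 0 := one_ne_zero
  -- support of a single
  have hsupp1 : ∀ i : Fin D → Fin n,
      (Finset.univ.filter fun x => (Pi.single i 1 : (Fin D → Fin n) → ZMod 2) x ≠ 0) = {i} := by
    intro i
    ext x
    simp only [Finset.mem_filter, Finset.mem_univ, true_and, Finset.mem_singleton]
    constructor
    · intro h
      by_contra hx
      exact h (by rw [Pi.single_eq_of_ne hx])
    · rintro rfl
      rw [Pi.single_eq_same]
      exact hone
  -- support of a pair
  have hsupp2 : ∀ i j : Fin D → Fin n, i ≠ j →
      (Finset.univ.filter fun x =>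
        ((Pi.single i 1 : (Fin D → Fin n) → ZMod 2) + (Pi.single j 1 : (Fin D → Fin n) → ZMod 2)) x ≠ 0) = {i, j} := by
    intro i j hij
    ext x
    simp only [Finset.mem_filter, Finset.mem_univ, true_and, Finset.mem_insert,
      Finset.mem_singleton, Pi.add_apply]
    rcases eq_or_ne x i with rfl | hxi
    · rw [Pi.single_eq_same, Pi.single_eq_of_ne hij]
      simp
    · rcases eq_or_ne x j with rfl | hxj
      · rw [Pi.single_eq_same, Pi.single_eq_of_ne hxi]
        simp
      · rw [Pi.single_eq_of_ne hxi, Pi.single_eq_of_ne hxj]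
        simp [hxi, hxj]
  have habs0 : ∀ i : Fin D → Fin n, ∀ t, |((i t : ℕ) : ℤ) - ((i t : ℕ) : ℤ)| < (b : ℤ) := by
    intro i t
    rw [sub_self, abs_zero]
    exact_mod_cast (by omega : 0 < b)
  have hmem1 : ∀ i : Fin D → Fin n, (Pi.single i 1 : (Fin D → Fin n) → ZMod 2) ∈ EF := by
    intro i
    rw [hEF, Finset.mem_filter]
    refine ⟨Finset.mem_univ _, ?_⟩
    rw [hS, Set.mem_setOf_eq, hsupp1 i]
    refine ⟨by simp, ?_⟩
    intro x hx y hy t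
    simp only [Finset.mem_singleton] at hx hy
    subst hx; subst hy
    exact habs0 _ t
  set Φ : ((Fin D → Fin n) × (Fin D → Fin n)) → ((Fin D → Fin n) → ZMod 2) :=
    fun p => (Pi.single p.1 1 : (Fin D → Fin n) → ZMod 2) + (Pi.single p.2 1 : (Fin D → Fin n) → ZMod 2) with hΦ
  set QF := Finset.univ.filter (fun p : (Fin D → Fin n) × (Fin D → Fin n) =>
      p.1 ≠ p.2 ∧ ∀ t, |((p.1 t : ℕ) : ℤ) - ((p.2 t : ℕ) : ℤ)| < (b : ℤ)) with hQF
  set Q := Finset.univ.filter (fun p : (Fin D → Fin n) × (Fin D → Fin n) =>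
      ∀ t, |((p.1 t : ℕ) : ℤ) - ((p.2 t : ℕ) : ℤ)| < (b : ℤ)) with hQmain
  have hmem2 : ∀ p ∈ QF, Φ p ∈ EF := by
    intro p hp
    rw [hQF, Finset.mem_filter] at hp
    obtain ⟨-, hne, hcl⟩ := hp
    rw [hEF, Finset.mem_filter]
    refine ⟨Finset.mem_univ _, ?_⟩
    rw [hS, Set.mem_setOf_eq]
    have hsupp := hsupp2 p.1 p.2 hne
    simp only [hΦ]
    constructor
    · rw [hsupp]
      exact (Finset.card_insert_le _ _).trans (by simp)
    · rw [hsupp]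
      intro x hx y hy t
      simp only [Finset.mem_insert, Finset.mem_singleton] at hx hy
      rcases hx with rfl | rfl <;> rcases hy with rfl | rfl
      · exact habs0 _ t
      · exact hcl t
      · rw [abs_sub_comm]; exact hcl t
      · exact habs0 _ t
  set A := QF.image Φ with hA
  set B := Finset.univ.image (fun i : Fin D → Fin n => (Pi.single i 1 : (Fin D → Fin n) → ZMod 2)) with hB
  have hsingle_inj : Function.Injective
      (fun i : Fin D → Fin n => (Pi.single i 1 : (Fin D → Fin n) → ZMod 2)) := by
    intro i j h
    by_contra hne
    have h2 := congrFun h i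
    simp only at h2
    rw [Pi.single_eq_same, Pi.single_eq_of_ne hne] at h2
    exact hone h2
  have hAsub : A ⊆ EF := by
    intro x hx
    rw [hA] at hx
    obtain ⟨p, hp, rfl⟩ := Finset.mem_image.1 hx
    exact hmem2 p hp
  have hBsub : B ⊆ EF := by
    intro x hx
    rw [hB] at hx
    obtain ⟨i, -, rfl⟩ := Finset.mem_image.1 hx
    exact hmem1 i
  have hdisj : Disjoint A B := by
    rw [Finset.disjoint_left]
    intro x hx hxB
    rw [hA] at hx
    obtain ⟨p, hp, rfl⟩ := Finset.mem_image.1 hx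
    rw [hB] at hxB
    obtain ⟨i, -, heq⟩ := Finset.mem_image.1 hxB
    rw [hQF, Finset.mem_filter] at hp
    have hsp := hsupp2 p.1 p.2 hp.2.1
    have hcards : (2 : ℕ) = 1 := by
      calc (2 : ℕ) = ({p.1, p.2} : Finset _).card := (Finset.card_pair hp.2.1).symm
        _ = (Finset.univ.filter fun x => Φ p x ≠ 0).card := by
            rw [hΦ]; exact congrArg Finset.card hsp.symm
        _ = (Finset.univ.filter fun x => (Pi.single i 1 : (Fin D → Fin n) → ZMod 2) x ≠ 0).card := by
            rw [heq]
        _ = 1 := by rw [hsupp1 i, Finset.card_singleton]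
    omega
  have hcardAB : A.card + B.card ≤ EF.card := by
    rw [← Finset.card_union_of_disjoint hdisj]
    exact Finset.card_le_card (Finset.union_subset hAsub hBsub)
  have hBcard : B.card = n ^ D := by
    rw [hB, Finset.card_image_of_injective _ hsingle_inj, Finset.card_univ, hNcard]
  have hQF2A : QF.card ≤ 2 * A.card := by
    rw [hA]
    refine Finset.card_le_mul_card_image QF 2 ?_
    intro v hv
    obtain ⟨p₀, hp₀, hv0⟩ := Finset.mem_image.1 hv
    rw [hQF, Finset.mem_filter] at hp₀
    have hne₀ : p₀.1 ≠ p₀.2 := hp₀.2.1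
    have hsub : (QF.filter fun p => Φ p = v) ⊆ {p₀, (p₀.2, p₀.1)} := by
      intro p hp
      rw [Finset.mem_filter] at hp
      obtain ⟨hpQF, hpv⟩ := hp
      rw [hQF, Finset.mem_filter] at hpQF
      have hne : p.1 ≠ p.2 := hpQF.2.1
      have hΦeq : (Pi.single p.1 1 : (Fin D → Fin n) → ZMod 2) + (Pi.single p.2 1 : (Fin D → Fin n) → ZMod 2)
          = (Pi.single p₀.1 1 : (Fin D → Fin n) → ZMod 2) + (Pi.single p₀.2 1 : (Fin D → Fin n) → ZMod 2) := by
        have h3 : Φ p = Φ p₀ := hpv.trans hv0.symm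
        rw [hΦ] at h3
        exact h3
      have hset : ({p.1, p.2} : Finset _) = {p₀.1, p₀.2} := by
        rw [← hsupp2 p.1 p.2 hne, ← hsupp2 p₀.1 p₀.2 hne₀, hΦeq]
      have h1 : p.1 = p₀.1 ∨ p.1 = p₀.2 := by
        have hm : p.1 ∈ ({p₀.1, p₀.2} : Finset _) := hset ▸ (by simp)
        simpa using hm
      have h2 : p.2 = p₀.1 ∨ p.2 = p₀.2 := by
        have hm : p.2 ∈ ({p₀.1, p₀.2} : Finset _) := hset ▸ (by simp)
        simpa using hm
      simp only [Finset.mem_insert, Finset.mem_singleton]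
      rcases h1 with h1 | h1 <;> rcases h2 with h2 | h2
      · exact absurd (h1.trans h2.symm) hne
      · left; exact Prod.ext h1 h2
      · right; exact Prod.ext h1 h2
      · exact absurd (h1.trans h2.symm) hne
    calc (QF.filter fun p => Φ p = v).card
        ≤ ({p₀, (p₀.2, p₀.1)} : Finset _).card := Finset.card_le_card hsub
      _ ≤ 2 := (Finset.card_insert_le _ _).trans (by simp)
  have hQQF : Q.card ≤ QF.card + n ^ D := by
    have hsub : Q ⊆ QF ∪ Finset.univ.image (fun i : Fin D → Fin n => (i, i)) := by
      intro p hp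
      rw [hQmain, Finset.mem_filter] at hp
      rcases eq_or_ne p.1 p.2 with h | h
      · refine Finset.mem_union_right _ (Finset.mem_image.2 ⟨p.1, Finset.mem_univ _, ?_⟩)
        exact Prod.ext rfl h
      · refine Finset.mem_union_left _ ?_
        rw [hQF, Finset.mem_filter]
        exact ⟨Finset.mem_univ _, h, hp.2⟩
    calc Q.card ≤ _ := Finset.card_le_card hsub
      _ ≤ QF.card + (Finset.univ.image (fun i : Fin D → Fin n => (i, i))).card :=
          Finset.card_union_le _ _
      _ ≤ QF.card + n ^ D := by
          have h1 := Finset.card_image_le (s := (Finset.univ : Finset (Fin D → Fin n)))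
            (f := fun i => (i, i))
          rw [Finset.card_univ, hNcard] at h1
          omega
  set qs : Finset (Fin n × Fin n) := Finset.univ.filter (fun p : Fin n × Fin n =>
      |((p.1 : ℕ) : ℤ) - ((p.2 : ℕ) : ℤ)| < (b : ℤ)) with hqs
  have honeD := oneD_stmt5 n b hb hbn
  rw [← hqs] at honeD
  have hqQ : qs.card ^ D ≤ Q.card := by
    have hmaps : ∀ f : Fin D → {p : Fin n × Fin n // p ∈ qs},
        f ∈ (Finset.univ : Finset (Fin D → {p : Fin n × Fin n // p ∈ qs})) →
        (((fun t => (f t).1.1, fun t => (f t).1.2)) :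
          (Fin D → Fin n) × (Fin D → Fin n)) ∈ Q := by
      intro f _
      rw [hQmain, Finset.mem_filter]
      refine ⟨Finset.mem_univ _, fun t => ?_⟩
      exact (Finset.mem_filter.1 (f t).2).2
    have hinj : Set.InjOn (fun f : Fin D → {p : Fin n × Fin n // p ∈ qs} =>
        ((fun t => (f t).1.1, fun t => (f t).1.2) :
          (Fin D → Fin n) × (Fin D → Fin n)))
        (Finset.univ : Finset (Fin D → {p : Fin n × Fin n // p ∈ qs})) := by
      intro f _ g _ h
      funext t
      have h1 := congrFun (congrArg Prod.fst h) t
      have h2 := congrFun (congrArg Prod.snd h) t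
      exact Subtype.ext (Prod.ext h1 h2)
    have hle := Finset.card_le_card_of_injOn _ hmaps hinj
    rwa [Finset.card_univ, Fintype.card_fun, Fintype.card_coe, Fintype.card_fin] at hle
  -- quotient bound
  have hfinV : Module.finrank (ZMod 2) ((Fin D → Fin n) → ZMod 2) = n ^ D := by
    rw [Module.finrank_pi, hNcard]
  have hkN : k ≤ n ^ D := by
    rw [hk, ← hfinV]
    exact Submodule.finrank_le C
  haveI : Finite (((Fin D → Fin n) → ZMod 2) ⧸ C) :=
    Finite.of_surjective _ (Submodule.Quotient.mk_surjective (p := C))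
  haveI fQ : Fintype (((Fin D → Fin n) → ZMod 2) ⧸ C) := Fintype.ofFinite _
  have hquotcard : Fintype.card (((Fin D → Fin n) → ZMod 2) ⧸ C) = 2 ^ (n ^ D - k) := by
    rw [Module.card_eq_pow_finrank (K := ZMod 2), ZMod.card]
    congr 1
    have h2 := Submodule.finrank_quotient_add_finrank C
    rw [hfinV] at h2
    omega
  have hEFle : EF.card ≤ 2 ^ (n ^ D - k) := by
    rw [← hquotcard, ← Finset.card_univ]
    refine Finset.card_le_card_of_injOn (Submodule.Quotient.mk (p := C))
      (fun a _ => Finset.mem_univ _) ?_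
    intro e₁ h₁ e₂ h₂ h
    by_contra hne
    have hm₁ : e₁ ∈ S := (Finset.mem_filter.1 (Finset.mem_coe.1 h₁)).2
    have hm₂ : e₂ ∈ S := (Finset.mem_filter.1 (Finset.mem_coe.1 h₂)).2
    exact hcorr e₁ hm₁ e₂ hm₂ hne ((Submodule.Quotient.eq C).1 h)
  -- the main counting inequality
  obtain ⟨m, hm⟩ : ∃ m, D = m + 1 := ⟨D - 1, by omega⟩
  set a := n * (2 * b - 1) with ha
  have hbb : b * (b - 1) ≤ a := by
    rw [ha]
    exact Nat.mul_le_mul hbn (by omega)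
  have hpow : a ^ D ≤ (a - b * (b - 1)) ^ D + D * (b * (b - 1)) * a ^ (D - 1) := by
    have h := pow_aux_stmt5 (a - b * (b - 1)) (b * (b - 1)) m
    rw [Nat.sub_add_cancel hbb] at h
    rw [hm]
    simpa using h
  have hcle : (a - b * (b - 1)) ^ D ≤ qs.card ^ D := Nat.pow_le_pow_left (by omega) D
  have hb2 : b * (b - 1) = b ^ 2 - b := by
    obtain ⟨c, rfl⟩ : ∃ c, b = c + 2 := ⟨b - 2, by omega⟩
    have h : (c + 2) ^ 2 = (c + 2) * (c + 1) + (c + 2) := by ring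
    exact (Nat.sub_eq_of_eq_add h).symm
  have hDd : D * (b * (b - 1)) * a ^ (D - 1) ≤ n ^ D := by
    have hfac : a ^ (D - 1) = (2 * b - 1) ^ (D - 1) * n ^ (D - 1) := by
      rw [ha, mul_pow, Nat.mul_comm]
    calc D * (b * (b - 1)) * a ^ (D - 1)
        = ((2 * b - 1) ^ (D - 1) * D * (b ^ 2 - b)) * n ^ (D - 1) := by
          rw [hfac, hb2]; ring
      _ ≤ n * n ^ (D - 1) := Nat.mul_le_mul_right _ hn
      _ = n ^ D := by
          rw [← pow_succ']
          congr 1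
          omega
  have haD : a ^ D = (2 * b - 1) ^ D * n ^ D := by rw [ha, mul_pow, Nat.mul_comm]
  have hkey : (2 * b - 1) ^ D * n ^ D ≤ 2 ^ (n ^ D - k + 1) := by
    have h2 : 2 ^ (n ^ D - k + 1) = 2 * 2 ^ (n ^ D - k) := by
      rw [pow_succ]; ring
    linarith [haD, hpow, hcle, hDd, hqQ, hQQF, hQF2A, hcardAB, hBcard, hEFle, honeD, h2]
  -- real-number endgame
  have hL : ((2 * b - 1 : ℕ) : ℝ) = 2 * (b : ℝ) - 1 := by
    rw [Nat.cast_sub (by omega : 1 ≤ 2 * b)]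
    push_cast
    ring
  have hcast : ((2 * (b : ℝ) - 1) ^ D * (n : ℝ) ^ D) ≤ (2 : ℝ) ^ (n ^ D - k + 1) := by
    rw [← hL]
    exact_mod_cast hkey
  have hbR : (1 : ℝ) < 2 := one_lt_two
  have hpos1 : (0 : ℝ) < 2 * (b : ℝ) - 1 := by
    have hblr : (2 : ℝ) ≤ (b : ℝ) := by exact_mod_cast hb
    linarith
  have hposn : (0 : ℝ) < (n : ℝ) := by exact_mod_cast hn0
  have hlog := Real.logb_le_logb_of_le hbR (by positivity) hcast
  rw [Real.logb_mul (by positivity) (by positivity), Real.logb_pow, Real.logb_pow,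
    Real.logb_pow, Real.logb_self_eq_one hbR, mul_one] at hlog
  have hNk : ((n ^ D - k + 1 : ℕ) : ℝ) = (n : ℝ) ^ D - (k : ℝ) + 1 := by
    rw [Nat.cast_add, Nat.cast_sub hkN, Nat.cast_pow, Nat.cast_one]
  rw [hNk] at hlog
  have hceil : (⌈Real.logb 2 ((n : ℝ) ^ D)⌉ : ℝ) < Real.logb 2 ((n : ℝ) ^ D) + 1 :=
    Int.ceil_lt_add_one _
  have hlogn : Real.logb 2 ((n : ℝ) ^ D) = D * Real.logb 2 (n : ℝ) := Real.logb_pow 2 (n : ℝ) D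
  linarith [hlog, hceil, hlogn]
end

section
/- Let D ≥ 1, b ≥ 2, n ≥ 4D(b-1), and let C ⊆ F_2^N, N = n^D, be a linear code correcting every 2-weight-limited b-burst in the L₁ model. Then ξ(C) ≥ b - 1 + log₂ C(D, b-1) - 3 when D ≥ b-1, and ξ(C) ≥ D + log₂ C(b-1, D) - 3 when D < b-1. -/
namespace Stmt12

/-! ### Partial sums extracted from a finset `T` -/

def gfun (m : ℕ) (T : Finset ℕ) (hT : T.card = m) : ℕ → ℕ :=
  fun j => if h : 1 ≤ j ∧ j ≤ m then T.orderEmbOfFin hT ⟨j - 1, by omega⟩ else 0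

def magfun (m : ℕ) (T : Finset ℕ) (hT : T.card = m) (l : ℕ) : ℕ :=
  gfun m T hT (l + 1) - gfun m T hT l

lemma gfun_zero (m : ℕ) (T : Finset ℕ) (hT : T.card = m) : gfun m T hT 0 = 0 := by
  simp [gfun]

lemma gfun_lt {K : ℕ} (m : ℕ) (T : Finset ℕ) (hT : T.card = m)
    (hsub : T ⊆ Finset.Icc 1 K) {j : ℕ} (hj : j < m) :
    gfun m T hT j < gfun m T hT (j + 1) := by
  have h1 : gfun m T hT (j + 1) = T.orderEmbOfFin hT ⟨j, hj⟩ := by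
    simp only [gfun]
    rw [dif_pos ⟨by omega, by omega⟩]
    congr 1
  rw [h1]
  rcases Nat.eq_zero_or_pos j with hj0 | hj0
  · subst hj0
    rw [gfun_zero]
    have hmem := Finset.orderEmbOfFin_mem T hT ⟨0, hj⟩
    have := hsub hmem
    simp only [Finset.mem_Icc] at this
    omega
  · have h2 : gfun m T hT j = T.orderEmbOfFin hT ⟨j - 1, by omega⟩ := by
      simp only [gfun]
      rw [dif_pos ⟨by omega, by omega⟩]
    rw [h2]
    exact (T.orderEmbOfFin hT).strictMono (by simp [Fin.lt_def]; omega)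

lemma gfun_le {K : ℕ} (m : ℕ) (T : Finset ℕ) (hT : T.card = m)
    (hsub : T ⊆ Finset.Icc 1 K) (j : ℕ) : gfun m T hT j ≤ K := by
  unfold gfun
  split
  · next h =>
      have hmem := Finset.orderEmbOfFin_mem T hT ⟨j - 1, by omega⟩
      have := hsub hmem
      simp only [Finset.mem_Icc] at this
      exact this.2
  · omega

lemma magfun_pos {K : ℕ} (m : ℕ) (T : Finset ℕ) (hT : T.card = m)
    (hsub : T ⊆ Finset.Icc 1 K) {l : ℕ} (hl : l < m) : 0 < magfun m T hT l := by
  have := gfun_lt m T hT hsub hl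
  unfold magfun; omega

lemma sum_mag {K : ℕ} (m : ℕ) (T : Finset ℕ) (hT : T.card = m)
    (hsub : T ⊆ Finset.Icc 1 K) {k : ℕ} (hk : k ≤ m) :
    ∑ l ∈ Finset.range k, magfun m T hT l = gfun m T hT k := by
  induction k with
  | zero => simp [gfun_zero]
  | succ k ih =>
      rw [Finset.sum_range_succ, ih (by omega)]
      have := gfun_lt m T hT hsub (show k < m by omega)
      unfold magfun
      omega

/-! ### The displacement vector -/

variable {D : ℕ}

def delta (m : ℕ) (S ε : Finset (Fin D)) (hS : S.card = m) (T : Finset ℕ)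
    (hT : T.card = m) : Fin D → ℤ :=
  fun t => if ht : t ∈ S then
    (if t ∈ ε then 1 else -1) *
      (magfun m T hT (((S.orderIsoOfFin hS).symm ⟨t, ht⟩ : Fin m) : ℕ) : ℤ)
  else 0

lemma delta_off (m : ℕ) (S ε : Finset (Fin D)) (hS : S.card = m) (T : Finset ℕ)
    (hT : T.card = m) {t : Fin D} (ht : t ∉ S) : delta m S ε hS T hT t = 0 := by
  simp [delta, ht]

lemma abs_delta (m : ℕ) (S ε : Finset (Fin D)) (hS : S.card = m) (T : Finset ℕ)
    (hT : T.card = m) {t : Fin D} (ht : t ∈ S) :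
    |delta m S ε hS T hT t| =
      (magfun m T hT (((S.orderIsoOfFin hS).symm ⟨t, ht⟩ : Fin m) : ℕ) : ℤ) := by
  simp only [delta, dif_pos ht]
  rw [abs_mul]
  split <;> simp

lemma delta_ne_zero {K : ℕ} (m : ℕ) (S ε : Finset (Fin D)) (hS : S.card = m) (T : Finset ℕ)
    (hT : T.card = m) (hsub : T ⊆ Finset.Icc 1 K) {t : Fin D} (ht : t ∈ S) :
    delta m S ε hS T hT t ≠ 0 := by
  intro h
  have h2 := abs_delta m S ε hS T hT ht
  rw [h] at h2
  have := magfun_pos m T hT hsub (l := (((S.orderIsoOfFin hS).symm ⟨t, ht⟩ : Fin m) : ℕ))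
    (((S.orderIsoOfFin hS).symm ⟨t, ht⟩ : Fin m)).isLt
  simp at h2
  omega

lemma delta_pos_iff {K : ℕ} (m : ℕ) (S ε : Finset (Fin D)) (hS : S.card = m) (T : Finset ℕ)
    (hT : T.card = m) (hsub : T ⊆ Finset.Icc 1 K) {t : Fin D} (ht : t ∈ S) :
    (0 < delta m S ε hS T hT t ↔ t ∈ ε) := by
  have hpos := magfun_pos m T hT hsub
    (l := (((S.orderIsoOfFin hS).symm ⟨t, ht⟩ : Fin m) : ℕ))
    (((S.orderIsoOfFin hS).symm ⟨t, ht⟩ : Fin m)).isLt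
  simp only [delta, dif_pos ht]
  split
  · next h => simpa using ⟨fun _ => h, fun _ => by exact_mod_cast hpos⟩
  · next h =>
      constructor
      · intro hc
        nlinarith [hpos]
      · intro hc; exact absurd hc h

lemma sum_abs_delta {K : ℕ} (m : ℕ) (S ε : Finset (Fin D)) (hS : S.card = m) (T : Finset ℕ)
    (hT : T.card = m) (hsub : T ⊆ Finset.Icc 1 K) :
    ∑ t : Fin D, |delta m S ε hS T hT t| = (gfun m T hT m : ℤ) := by
  have h1 : ∑ t : Fin D, |delta m S ε hS T hT t| = ∑ t ∈ S, |delta m S ε hS T hT t| := by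
    rw [← Finset.sum_subset (Finset.subset_univ S)]
    intro x _ hx
    rw [delta_off m S ε hS T hT hx]
    simp
  rw [h1, ← Finset.sum_coe_sort S]
  have h2 : ∀ x : {x // x ∈ S}, |delta m S ε hS T hT x.1| =
      (fun x : {x // x ∈ S} =>
        (magfun m T hT (((S.orderIsoOfFin hS).symm x : Fin m) : ℕ) : ℤ)) x := by
    intro x
    exact abs_delta m S ε hS T hT x.2
  rw [Fintype.sum_congr _ _ h2]
  rw [← Equiv.sum_comp (S.orderIsoOfFin hS).toEquiv]
  have h3 : ∀ k : Fin m,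
      (fun x : {x // x ∈ S} =>
        (magfun m T hT (((S.orderIsoOfFin hS).symm x : Fin m) : ℕ) : ℤ))
        ((S.orderIsoOfFin hS).toEquiv k) = (magfun m T hT (k : ℕ) : ℤ) := by
    intro k
    simp
  rw [Fintype.sum_congr _ _ h3]
  rw [Fin.sum_univ_eq_sum_range (fun l => (magfun m T hT l : ℤ)) m]
  rw [← Nat.cast_sum]
  rw [sum_mag m T hT hsub (le_refl m)]

lemma abs_delta_le {K : ℕ} (m : ℕ) (S ε : Finset (Fin D)) (hS : S.card = m) (T : Finset ℕ)
    (hT : T.card = m) (hsub : T ⊆ Finset.Icc 1 K) (t : Fin D) :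
    |delta m S ε hS T hT t| ≤ (K : ℤ) := by
  by_cases ht : t ∈ S
  · rw [abs_delta m S ε hS T hT ht]
    have h1 : magfun m T hT (((S.orderIsoOfFin hS).symm ⟨t, ht⟩ : Fin m) : ℕ)
        ≤ ∑ l ∈ Finset.range m, magfun m T hT l := by
      apply Finset.single_le_sum (fun _ _ => Nat.zero_le _)
      exact Finset.mem_range.mpr ((S.orderIsoOfFin hS).symm ⟨t, ht⟩).isLt
    have h2 := sum_mag m T hT hsub (le_refl m)
    have h3 := gfun_le m T hT hsub m
    exact_mod_cast le_trans h1 (by omega)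
  · simp [delta, ht]

lemma delta_sdiff (m : ℕ) (S ε : Finset (Fin D)) (hS : S.card = m) (T : Finset ℕ)
    (hT : T.card = m) (t : Fin D) :
    delta m S (S \ ε) hS T hT t = - delta m S ε hS T hT t := by
  by_cases ht : t ∈ S
  · simp only [delta, dif_pos ht, Finset.mem_sdiff]
    by_cases hε : t ∈ ε
    · simp [hε, ht]
    · simp [hε, ht]
  · simp [delta, ht]

/-! ### Packs and the error-vector map -/

abbrev PackT (D : ℕ) := (Fin D → ℕ) × ((Σ _ : Finset (Fin D), Finset (Fin D)) × Finset ℕ)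

def uvec (n : ℕ) (hn : 0 < n) (i : Fin D → ℕ) : Fin D → Fin n :=
  fun t => ⟨i t % n, Nat.mod_lt _ hn⟩

def vvec (n : ℕ) (hn : 0 < n) (i : Fin D → ℕ) (δ : Fin D → ℤ) : Fin D → Fin n :=
  fun t => ⟨((i t : ℤ) + δ t).toNat % n, Nat.mod_lt _ hn⟩

def errVec (n D : ℕ) (u v : Fin D → Fin n) : (Fin D → Fin n) → ZMod 2 :=
  fun x => if x = u ∨ x = v then 1 else 0

def fmap (n m : ℕ) (hn : 0 < n) (P : PackT D) : (Fin D → Fin n) → ZMod 2 :=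
  if h : P.2.1.1.card = m ∧ P.2.2.card = m then
    errVec n D (uvec n hn P.1)
      (vvec n hn P.1 (delta m P.2.1.1 P.2.1.2 h.1 P.2.2 h.2))
  else 0

def QSet (n K m D : ℕ) : Finset (PackT D) :=
  (Fintype.piFinset fun _ : Fin D => Finset.Ico K (n - K)) ×ˢ
    (((Finset.powersetCard m (Finset.univ : Finset (Fin D))).sigma fun S => S.powerset) ×ˢ
      Finset.powersetCard m (Finset.Icc 1 K))

lemma QSet_card (n K m D : ℕ) :
    (QSet n K m D).card = (n - K - K) ^ D * ((D.choose m * 2 ^ m) * K.choose m) := by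
  unfold QSet
  rw [Finset.card_product, Finset.card_product, Fintype.card_piFinset]
  congr 1
  · simp [Nat.card_Ico]
  congr 1
  · rw [Finset.card_sigma]
    have : ∀ S ∈ Finset.powersetCard m (Finset.univ : Finset (Fin D)),
        S.powerset.card = 2 ^ m := by
      intro S hS
      rw [Finset.card_powerset, (Finset.mem_powersetCard.mp hS).2]
    rw [Finset.sum_congr rfl this, Finset.sum_const, Finset.card_powersetCard,
      Finset.card_univ, Fintype.card_fin, smul_eq_mul]
  · rw [Finset.card_powersetCard, Nat.card_Icc, Nat.add_sub_cancel]

lemma errVec_support (n D : ℕ) (u v : Fin D → Fin n) :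
    (Finset.univ.filter fun x => errVec n D u v x ≠ 0) = {u, v} := by
  ext x
  simp only [Finset.mem_filter, Finset.mem_univ, true_and, errVec,
    Finset.mem_insert, Finset.mem_singleton]
  constructor
  · intro h
    by_contra hc
    push_neg at hc
    replace h : (if x = u ∨ x = v then (1 : ZMod 2) else 0) ≠ 0 := (Finset.mem_filter.mp h).2
    rw [if_neg (by tauto)] at h
    exact h rfl
  · intro h
    refine Finset.mem_filter.mpr ⟨Finset.mem_univ _, ?_⟩
    rw [if_pos h]
    exact one_ne_zero

lemma errVec_pairs {n : ℕ} {u v u' v' : Fin D → Fin n} (huv : u ≠ v)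
    (h : errVec n D u v = errVec n D u' v') :
    (u' = u ∧ v' = v) ∨ (u' = v ∧ v' = u) := by
  have key : ∀ x, (x = u ∨ x = v) ↔ (x = u' ∨ x = v') := by
    intro x
    have hx := congrFun h x
    simp only [errVec] at hx
    constructor
    · intro hor
      by_contra hc
      rw [if_pos hor, if_neg hc] at hx
      exact one_ne_zero hx
    · intro hor
      by_contra hc
      rw [if_neg hc, if_pos hor] at hx
      exact one_ne_zero hx.symm
  have hu := (key u).mp (Or.inl rfl)
  have hv := (key v).mp (Or.inr rfl)
  rcases hu with hu | hu
  · rcases hv with hv | hv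
    · exact absurd (hu.trans hv.symm) huv
    · exact Or.inl ⟨hu.symm, hv.symm⟩
  · rcases hv with hv | hv
    · exact Or.inr ⟨hv.symm, hu.symm⟩
    · exact absurd (hu.trans hv.symm) huv

lemma sub_vec (n K : ℕ) (hn : 0 < n) (i : Fin D → ℕ) (δ : Fin D → ℤ)
    (hlo : ∀ t, K ≤ i t) (hhi : ∀ t, i t < n - K) (habs : ∀ t, |δ t| ≤ (K : ℤ))
    (t : Fin D) :
    ((vvec n hn i δ t : ℕ) : ℤ) - ((uvec n hn i t : ℕ) : ℤ) = δ t := by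
  have h1 := hlo t
  have h2 := hhi t
  have h3 := habs t
  have habs' : -(K : ℤ) ≤ δ t ∧ δ t ≤ (K : ℤ) := abs_le.mp h3
  have hnn : (0 : ℤ) ≤ (i t : ℤ) + δ t := by
    have : (K : ℤ) ≤ (i t : ℤ) := by exact_mod_cast h1
    omega
  have hlt : (i t : ℤ) + δ t < (n : ℤ) := by
    have : (i t : ℤ) < (n : ℤ) - (K : ℤ) := by
      have : i t < n - K := h2
      omega
    omega
  have htn : ((i t : ℤ) + δ t).toNat < n := by omega
  have hin : i t < n := by omega
  simp only [uvec, vvec]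
  rw [Nat.mod_eq_of_lt htn, Nat.mod_eq_of_lt hin]
  omega

lemma pack_eq (n K m : ℕ) (hn : 0 < n) (P P' : PackT D)
    (h1 : P.2.1.1.card = m) (h2 : P.2.2.card = m)
    (h1' : P'.2.1.1.card = m) (h2' : P'.2.2.card = m)
    (hTs : P.2.2 ⊆ Finset.Icc 1 K) (hTs' : P'.2.2 ⊆ Finset.Icc 1 K)
    (hε : P.2.1.2 ⊆ P.2.1.1) (hε' : P'.2.1.2 ⊆ P'.2.1.1)
    (hi : ∀ t, P.1 t < n) (hi' : ∀ t, P'.1 t < n)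
    (hu : uvec n hn P.1 = uvec n hn P'.1)
    (hd : delta m P.2.1.1 P.2.1.2 h1 P.2.2 h2 = delta m P'.2.1.1 P'.2.1.2 h1' P'.2.2 h2') :
    P = P' := by
  obtain ⟨i, ⟨⟨S, ε⟩, T⟩⟩ := P
  obtain ⟨i', ⟨⟨S', ε'⟩, T'⟩⟩ := P'
  simp only at h1 h2 h1' h2' hTs hTs' hε hε' hi hi' hu hd ⊢
  have hii : i = i' := by
    funext t
    have := congrFun hu t
    simp only [uvec, Fin.mk.injEq] at this
    rwa [Nat.mod_eq_of_lt (hi t), Nat.mod_eq_of_lt (hi' t)] at this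
  subst hii
  have hSS : S = S' := by
    ext t
    constructor
    · intro ht
      by_contra ht'
      have hz : delta m S' ε' h1' T' h2' t = 0 := delta_off _ _ _ _ _ _ ht'
      rw [← hd] at hz
      exact delta_ne_zero m S ε h1 T h2 hTs ht hz
    · intro ht
      by_contra ht'
      have hz : delta m S ε h1 T h2 t = 0 := delta_off _ _ _ _ _ _ ht'
      rw [hd] at hz
      exact delta_ne_zero m S' ε' h1' T' h2' hTs' ht hz
  subst hSS
  have hmag : ∀ l < m, magfun m T h2 l = magfun m T' h2' l := by
    intro l hl
    set k : Fin m := ⟨l, hl⟩ with hk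
    have ht : ((S.orderIsoOfFin h1) k : Fin D) ∈ S := ((S.orderIsoOfFin h1) k).2
    have e1 := abs_delta m S ε h1 T h2 ht
    have e2 := abs_delta m S ε' h1' T' h2' ht
    rw [hd] at e1
    rw [e2] at e1
    have hrank : ((S.orderIsoOfFin h1).symm ⟨((S.orderIsoOfFin h1) k : Fin D), ht⟩) = k := by
      rw [show (⟨((S.orderIsoOfFin h1) k : Fin D), ht⟩ : {x // x ∈ S}) = (S.orderIsoOfFin h1) k
        from rfl]
      exact OrderIso.symm_apply_apply _ _
    rw [hrank] at e1
    exact_mod_cast e1.symm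
  have hg : ∀ j, j ≤ m → gfun m T h2 j = gfun m T' h2' j := by
    intro j hj
    rw [← sum_mag m T h2 hTs hj, ← sum_mag m T' h2' hTs' hj]
    exact Finset.sum_congr rfl fun l hl => hmag l (by
      have := Finset.mem_range.mp hl; omega)
  have hTT : T = T' := by
    have hfun : ⇑(T.orderEmbOfFin h2) = ⇑(T'.orderEmbOfFin h2') := by
      funext k
      have hp : ∀ (U : Finset ℕ) (hU : U.card = m), U.orderEmbOfFin hU k
          = gfun m U hU ((k : ℕ) + 1) := by
        intro U hU
        simp only [gfun]
        rw [dif_pos ⟨by omega, by omega⟩]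
        congr 1
      rw [hp T h2, hp T' h2', hg ((k : ℕ) + 1) (by omega)]
    apply Finset.coe_injective
    rw [← Finset.range_orderEmbOfFin T h2, ← Finset.range_orderEmbOfFin T' h2', hfun]
  subst hTT
  have hεε : ε = ε' := by
    ext t
    by_cases ht : t ∈ S
    · rw [← delta_pos_iff m S ε h1 T h2 hTs ht, ← delta_pos_iff m S ε' h1' T h2' hTs' ht, hd]
    · constructor
      · intro hc; exact absurd (hε hc) ht
      · intro hc; exact absurd (hε' hc) ht
  subst hεε
  rfl

/-! ### Membership facts for packs in `QSet` -/

lemma QSet_spec {n K m : ℕ} {P : PackT D} (hP : P ∈ QSet n K m D) :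
    (∀ t, K ≤ P.1 t ∧ P.1 t < n - K) ∧
    (P.2.1.1.card = m ∧ P.2.1.2 ⊆ P.2.1.1) ∧
    (P.2.2 ⊆ Finset.Icc 1 K ∧ P.2.2.card = m) := by
  obtain ⟨i, ⟨⟨S, ε⟩, T⟩⟩ := P
  simp only [QSet, Finset.mem_product, Fintype.mem_piFinset, Finset.mem_sigma,
    Finset.mem_powersetCard, Finset.mem_powerset, Finset.mem_Ico] at hP
  exact ⟨hP.1, ⟨hP.2.1.1.2, hP.2.1.2⟩, ⟨hP.2.2.1, hP.2.2.2⟩⟩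


lemma uv_ne (n K m : ℕ) (hn : 0 < n) (hm : 0 < m) {P : PackT D} (hP : P ∈ QSet n K m D)
    (h1 : P.2.1.1.card = m) (h2 : P.2.2.card = m) :
    uvec n hn P.1 ≠ vvec n hn P.1 (delta m P.2.1.1 P.2.1.2 h1 P.2.2 h2) := by
  obtain ⟨hI, ⟨hS, hε⟩, hTs, hT⟩ := QSet_spec hP
  obtain ⟨t, ht⟩ := Finset.card_pos.mp (show 0 < P.2.1.1.card by omega)
  intro hcon
  have hsv := sub_vec n K hn P.1 (delta m P.2.1.1 P.2.1.2 h1 P.2.2 h2)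
    (fun t => (hI t).1) (fun t => (hI t).2)
    (abs_delta_le m P.2.1.1 P.2.1.2 h1 P.2.2 h2 hTs) t
  rw [← hcon] at hsv
  simp at hsv
  exact delta_ne_zero m P.2.1.1 P.2.1.2 h1 P.2.2 h2 hTs ht hsv.symm

lemma fmap_mem (n K m : ℕ) (hn : 0 < n) (hm : 0 < m) {P : PackT D} (hP : P ∈ QSet n K m D) :
    (Finset.univ.filter fun x => fmap n m hn P x ≠ 0).card ≤ 2 ∧
      ∀ x ∈ Finset.univ.filter (fun x => fmap n m hn P x ≠ 0),
        ∀ y ∈ Finset.univ.filter (fun x => fmap n m hn P x ≠ 0),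
          ∑ t : Fin D, |((x t : ℕ) : ℤ) - ((y t : ℕ) : ℤ)| ≤ (K : ℤ) := by
  obtain ⟨hI, ⟨hS, hε⟩, hTs, hT⟩ := QSet_spec hP
  set δ := delta m P.2.1.1 P.2.1.2 hS P.2.2 hT with hδ
  set u := uvec n hn P.1 with hu
  set v := vvec n hn P.1 δ with hv
  have hfP : fmap n m hn P = errVec n D u v := dif_pos ⟨hS, hT⟩
  have hsupp : (Finset.univ.filter fun x => fmap n m hn P x ≠ 0) = {u, v} := by
    rw [hfP]; exact errVec_support n D u v
  have hdist : ∀ t : Fin D, |((u t : ℕ) : ℤ) - ((v t : ℕ) : ℤ)| = |δ t| := by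
    intro t
    have hsv := sub_vec n K hn P.1 δ (fun t => (hI t).1) (fun t => (hI t).2)
      (abs_delta_le m P.2.1.1 P.2.1.2 hS P.2.2 hT hTs) t
    rw [show ((u t : ℕ) : ℤ) - ((v t : ℕ) : ℤ) = -(((v t : ℕ) : ℤ) - ((u t : ℕ) : ℤ)) by ring,
      abs_neg, hsv]
  have hsum : ∑ t : Fin D, |((u t : ℕ) : ℤ) - ((v t : ℕ) : ℤ)| ≤ (K : ℤ) := by
    rw [Finset.sum_congr rfl fun t _ => hdist t]
    rw [sum_abs_delta m P.2.1.1 P.2.1.2 hS P.2.2 hT hTs]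
    exact_mod_cast gfun_le m P.2.2 hT hTs m
  have hsum' : ∑ t : Fin D, |((v t : ℕ) : ℤ) - ((u t : ℕ) : ℤ)| ≤ (K : ℤ) := by
    rw [Finset.sum_congr rfl fun t (_ : t ∈ Finset.univ) => abs_sub_comm ((v t : ℕ) : ℤ) _]
    exact hsum
  constructor
  · rw [hsupp]
    exact le_trans (Finset.card_insert_le _ _) (by simp)
  · intro x hx y hy
    rw [hsupp, Finset.mem_insert, Finset.mem_singleton] at hx hy
    have hzero : ∀ z : Fin D → Fin n, ∑ t : Fin D, |((z t : ℕ) : ℤ) - ((z t : ℕ) : ℤ)| ≤ (K : ℤ) := by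
      intro z
      simp
    rcases hx with hx | hx <;> rcases hy with hy | hy <;> subst hx <;> subst hy
    · exact hzero u
    · exact hsum
    · exact hsum'
    · exact hzero v

lemma fiber_card (n K m : ℕ) (hn : 0 < n) (hm : 0 < m) (e : (Fin D → Fin n) → ZMod 2)
    (he : e ∈ (QSet n K m D).image (fmap n m hn)) :
    ((QSet n K m D).filter fun P => fmap n m hn P = e).card ≤ 2 := by
  obtain ⟨P, hPQ, hPe⟩ := Finset.mem_image.mp he
  obtain ⟨hI, ⟨hS1, hεs⟩, hTs, hT2⟩ := QSet_spec hPQ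
  set δ := delta m P.2.1.1 P.2.1.2 hS1 P.2.2 hT2 with hδ
  set Pm : PackT D :=
    (fun t => ((P.1 t : ℤ) + δ t).toNat, ⟨⟨P.2.1.1, P.2.1.1 \ P.2.1.2⟩, P.2.2⟩) with hPmd
  have habs := abs_delta_le m P.2.1.1 P.2.1.2 hS1 P.2.2 hT2 hTs
  have hi : ∀ t, P.1 t < n := fun t => by have := (hI t).2; omega
  have hsv := sub_vec n K hn P.1 δ (fun t => (hI t).1) (fun t => (hI t).2) habs
  have hsubset : ((QSet n K m D).filter fun P' => fmap n m hn P' = e) ⊆ {P, Pm} := by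
    intro P' hP'
    obtain ⟨hP'Q, hP'e⟩ := Finset.mem_filter.mp hP'
    obtain ⟨hI', ⟨hS1', hεs'⟩, hTs', hT2'⟩ := QSet_spec hP'Q
    set δ' := delta m P'.2.1.1 P'.2.1.2 hS1' P'.2.2 hT2' with hδ'
    have hi' : ∀ t, P'.1 t < n := fun t => by have := (hI' t).2; omega
    have hsv' := sub_vec n K hn P'.1 δ' (fun t => (hI' t).1) (fun t => (hI' t).2)
      (abs_delta_le m P'.2.1.1 P'.2.1.2 hS1' P'.2.2 hT2' hTs')
    have hfP : fmap n m hn P = errVec n D (uvec n hn P.1) (vvec n hn P.1 δ) :=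
      dif_pos ⟨hS1, hT2⟩
    have hfP' : fmap n m hn P' = errVec n D (uvec n hn P'.1) (vvec n hn P'.1 δ') :=
      dif_pos ⟨hS1', hT2'⟩
    have heq : errVec n D (uvec n hn P.1) (vvec n hn P.1 δ)
        = errVec n D (uvec n hn P'.1) (vvec n hn P'.1 δ') := by
      rw [← hfP, ← hfP', hPe, hP'e]
    have hne : uvec n hn P.1 ≠ vvec n hn P.1 δ := uv_ne n K m hn hm hPQ hS1 hT2
    rcases errVec_pairs hne heq with ⟨hu, hv⟩ | ⟨hu, hv⟩
    · have hd' : δ' = δ := by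
        funext t
        have s1 := hsv' t
        rw [hu, hv] at s1
        rw [← s1, ← hsv t]
      have : P' = P := pack_eq n K m hn P' P hS1' hT2' hS1 hT2 hTs' hTs hεs' hεs hi' hi
        hu (by rw [← hδ', ← hδ, hd'])
      rw [Finset.mem_insert]
      exact Or.inl this
    · have hiPm : ∀ t, Pm.1 t < n := by
        intro t
        have h1 := (hI t).1
        have h2 := (hI t).2
        have h3 := habs t
        have h4 : |δ t| ≤ (K : ℤ) := h3
        have : ((P.1 t : ℤ) + δ t) < (n : ℤ) := by
          have : (P.1 t : ℤ) < (n : ℤ) - (K : ℤ) := by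
            have : P.1 t < n - K := h2
            omega
          have := abs_le.mp h4
          omega
        simp only [hPmd]
        omega
      have hum : uvec n hn P'.1 = uvec n hn Pm.1 := by
        rw [hu]
        rfl
      have hdm : delta m Pm.2.1.1 Pm.2.1.2 hS1 P.2.2 hT2 = -δ := by
        funext t
        exact delta_sdiff m P.2.1.1 P.2.1.2 hS1 P.2.2 hT2 t
      have hd' : δ' = -δ := by
        funext t
        have s1 := hsv' t
        rw [hu, hv] at s1
        have s2 := hsv t
        simp only [Pi.neg_apply]
        omega
      have : P' = Pm := pack_eq n K m hn P' Pm hS1' hT2' hS1 hT2 hTs' hTs hεs'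
        Finset.sdiff_subset hi' hiPm hum
        (by rw [← hδ', hd', ← hdm])
      rw [Finset.mem_insert, Finset.mem_singleton]
      exact Or.inr this
  calc ((QSet n K m D).filter fun P' => fmap n m hn P' = e).card
      ≤ ({P, Pm} : Finset (PackT D)).card := Finset.card_le_card hsubset
    _ ≤ 2 := le_trans (Finset.card_insert_le _ _) (by simp)


lemma final (n D K m r c : ℕ) (hD : 1 ≤ D) (hK : 1 ≤ K)
    (hn4 : 4 * D * K ≤ n) (hc : 1 ≤ c)
    (hcount : (n - 2 * K) ^ D * (2 ^ m * c) ≤ 2 * 2 ^ r) :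
    ((r : ℝ)) - (⌈Real.logb 2 ((n : ℝ) ^ D)⌉ : ℝ) ≥ (m : ℝ) + Real.logb 2 c - 3 := by
  have h2K : 2 * K ≤ n := by nlinarith
  have hn0 : 0 < n := by nlinarith
  have hnR : (0 : ℝ) < (n : ℝ) := by exact_mod_cast hn0
  have h4R : (4 : ℝ) * D * K ≤ n := by exact_mod_cast hn4
  have h2KR : 2 * (K : ℝ) ≤ n := by exact_mod_cast h2K
  set a : ℝ := -(2 * (K : ℝ)) / (n : ℝ) with ha_def
  have hxa : ((n - 2 * K : ℕ) : ℝ) = (1 + a) * (n : ℝ) := by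
    rw [Nat.cast_sub h2K]
    push_cast
    rw [ha_def]
    field_simp
    ring
  have hfrac : (2 * (D : ℝ) * K) / n ≤ 1 / 2 := by
    rw [div_le_div_iff₀ hnR (by norm_num)]
    have hD1 : (1 : ℝ) ≤ (D : ℝ) := by exact_mod_cast hD
    nlinarith
  have haD : (1 : ℝ) + (D : ℝ) * a ≥ 1 / 2 := by
    have : (D : ℝ) * a = -((2 * (D : ℝ) * K) / n) := by
      rw [ha_def]; ring
    rw [this]
    linarith
  have hber : ((1 : ℝ) + a) ^ D ≥ 1 / 2 := by
    have hq : (2 * (K : ℝ)) / n ≤ 1 := by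
      rw [div_le_one hnR]; exact h2KR
    have h2a : (-2 : ℝ) ≤ a := by
      rw [ha_def, neg_div]
      linarith
    have := one_add_mul_le_pow h2a D
    linarith
  have hxD : ((n - 2 * K : ℕ) : ℝ) ^ D ≥ (n : ℝ) ^ D / 2 := by
    rw [hxa, mul_pow]
    have hnD : (0 : ℝ) < (n : ℝ) ^ D := by positivity
    nlinarith [pow_pos hnR D]
  have hchain : (n : ℝ) ^ D * (2 ^ m * c) ≤ 2 ^ (r + 2) := by
    have h1 : ((n - 2 * K : ℕ) : ℝ) ^ D * (2 ^ m * (c : ℝ)) ≤ 2 * 2 ^ r := by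
      exact_mod_cast hcount
    have hpos : (0 : ℝ) < 2 ^ m * (c : ℝ) := by positivity
    calc (n : ℝ) ^ D * (2 ^ m * c) ≤ 2 * (((n - 2 * K : ℕ) : ℝ) ^ D) * (2 ^ m * c) := by
          nlinarith
      _ = 2 * (((n - 2 * K : ℕ) : ℝ) ^ D * (2 ^ m * c)) := by ring
      _ ≤ 2 * (2 * 2 ^ r) := by linarith
      _ = 2 ^ (r + 2) := by ring
  have hm2 : Real.logb 2 ((2 : ℝ) ^ m) = (m : ℝ) := by
    rw [Real.logb_pow]
    simp
  have hr2 : Real.logb 2 ((2 : ℝ) ^ (r + 2)) = (r : ℝ) + 2 := by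
    rw [Real.logb_pow]
    simp
  have hlog : Real.logb 2 ((n : ℝ) ^ D) + ((m : ℝ) + Real.logb 2 c) ≤ (r : ℝ) + 2 := by
    have hposL : (0 : ℝ) < (n : ℝ) ^ D * (2 ^ m * c) := by positivity
    have hposR : (0 : ℝ) < (2 : ℝ) ^ (r + 2) := by positivity
    have hlb := (Real.logb_le_logb (by norm_num : (1:ℝ) < 2) hposL hposR).mpr hchain
    rw [Real.logb_mul (by positivity) (by positivity),
      Real.logb_mul (by positivity) (by positivity), hm2, hr2] at hlb
    exact hlb
  have hceil : (⌈Real.logb 2 ((n : ℝ) ^ D)⌉ : ℝ) < Real.logb 2 ((n : ℝ) ^ D) + 1 :=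
    Int.ceil_lt_add_one _
  linarith

end Stmt12

/-- Let `D ≥ 1`, `b ≥ 2`, `n ≥ 4D(b-1)`, and let `C ⊆ F_2^N`, `N = n^D`, be a linear
code correcting every 2-weight-limited `b`-burst in the `L₁` model (all such error
vectors lie in distinct cosets of `C`).  Then the excess redundancy
`ξ(C) = (N - dim C) - ⌈log₂ N⌉` satisfies `ξ(C) ≥ b - 1 + log₂ C(D,b-1) - 3` when
`D ≥ b-1`, and `ξ(C) ≥ D + log₂ C(b-1,D) - 3` when `D < b-1`. -/
theorem stmt_12 (n b D : ℕ) (hb : 2 ≤ b) (hD : 1 ≤ D) (hbn : b ≤ n)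
    (hn : 4 * D * (b - 1) ≤ n)
    (C : Submodule (ZMod 2) ((Fin D → Fin n) → ZMod 2))
    (hcorr : ∀ e₁ ∈ {e : (Fin D → Fin n) → ZMod 2 |
        (Finset.univ.filter (fun i => e i ≠ 0)).card ≤ 2 ∧
        ∀ i ∈ Finset.univ.filter (fun i => e i ≠ 0),
          ∀ j ∈ Finset.univ.filter (fun i => e i ≠ 0),
            ∑ t : Fin D, |((i t : ℕ) : ℤ) - ((j t : ℕ) : ℤ)| < (b : ℤ)},
      ∀ e₂ ∈ {e : (Fin D → Fin n) → ZMod 2 |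
        (Finset.univ.filter (fun i => e i ≠ 0)).card ≤ 2 ∧
        ∀ i ∈ Finset.univ.filter (fun i => e i ≠ 0),
          ∀ j ∈ Finset.univ.filter (fun i => e i ≠ 0),
            ∑ t : Fin D, |((i t : ℕ) : ℤ) - ((j t : ℕ) : ℤ)| < (b : ℤ)},
        e₁ ≠ e₂ → e₁ - e₂ ∉ C) :
    (b - 1 ≤ D →
      ((n : ℝ) ^ D - Module.finrank (ZMod 2) C) - (⌈Real.logb 2 ((n : ℝ) ^ D)⌉ : ℝ)
        ≥ ((b : ℝ) - 1) + Real.logb 2 (D.choose (b - 1)) - 3) ∧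
    (D < b - 1 →
      ((n : ℝ) ^ D - Module.finrank (ZMod 2) C) - (⌈Real.logb 2 ((n : ℝ) ^ D)⌉ : ℝ)
        ≥ (D : ℝ) + Real.logb 2 ((b - 1).choose D) - 3) := by
  classical
  open Stmt12 in
  set K := b - 1 with hK_def
  have hK : 1 ≤ K := by omega
  set m := min D K with hm_def
  have hm : 0 < m := by omega
  have hn0 : 0 < n := by omega
  -- the set of admissible error vectors, as a finset
  set F := Finset.univ.filter (fun e : (Fin D → Fin n) → ZMod 2 =>
    (Finset.univ.filter (fun i => e i ≠ 0)).card ≤ 2 ∧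
    ∀ i ∈ Finset.univ.filter (fun i => e i ≠ 0),
      ∀ j ∈ Finset.univ.filter (fun i => e i ≠ 0),
        ∑ t : Fin D, |((i t : ℕ) : ℤ) - ((j t : ℕ) : ℤ)| < (b : ℤ)) with hF_def
  have himg : (Stmt12.QSet n K m D).image (Stmt12.fmap n m hn0) ⊆ F := by
    intro e he
    obtain ⟨P, hPQ, hPe⟩ := Finset.mem_image.mp he
    obtain ⟨hc2, hdist⟩ := Stmt12.fmap_mem n K m hn0 hm hPQ
    rw [hF_def, Finset.mem_filter]
    refine ⟨Finset.mem_univ _, ?_, ?_⟩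
    · rw [← hPe]; exact hc2
    · rw [← hPe]
      intro i hi j hj
      have hKb : (K : ℤ) < (b : ℤ) := by
        rw [hK_def]
        push_cast [Nat.cast_sub (by omega : 1 ≤ b)]
        omega
      exact lt_of_le_of_lt (hdist i hi j hj) hKb
  have h2to1 : (Stmt12.QSet n K m D).card ≤
      2 * ((Stmt12.QSet n K m D).image (Stmt12.fmap n m hn0)).card :=
    Finset.card_le_mul_card_image _ 2 (fun e he => Stmt12.fiber_card n K m hn0 hm e he)
  have hQF : (Stmt12.QSet n K m D).card ≤ 2 * F.card := by
    have := Finset.card_le_card himg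
    omega
  -- linear-algebra bound
  have hVfin : Module.finrank (ZMod 2) ((Fin D → Fin n) → ZMod 2) = n ^ D := by
    rw [Module.finrank_pi]
    simp [Fintype.card_fun]
  have hfr_le : Module.finrank (ZMod 2) C ≤ n ^ D := hVfin ▸ Submodule.finrank_le C
  have hquot : Module.finrank (ZMod 2) (((Fin D → Fin n) → ZMod 2) ⧸ C)
      = n ^ D - Module.finrank (ZMod 2) C := by
    have h := Submodule.finrank_quotient_add_finrank C
    rw [hVfin] at h
    omega
  haveI : Fintype (((Fin D → Fin n) → ZMod 2) ⧸ C) := Fintype.ofFinite _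
  have hcard : Fintype.card (((Fin D → Fin n) → ZMod 2) ⧸ C)
      = 2 ^ (n ^ D - Module.finrank (ZMod 2) C) := by
    rw [Module.card_eq_pow_finrank (K := ZMod 2), hquot, ZMod.card]
  have hFcard : F.card ≤ 2 ^ (n ^ D - Module.finrank (ZMod 2) C) := by
    rw [← hcard, ← Finset.card_univ]
    apply Finset.card_le_card_of_injOn (fun e => Submodule.Quotient.mk (p := C) e)
      (fun _ _ => Finset.mem_univ _)
    intro e₁ he₁ e₂ he₂ hq
    by_contra hne
    rw [Finset.mem_coe, hF_def, Finset.mem_filter] at he₁ he₂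
    exact hcorr e₁ he₁.2 e₂ he₂.2 hne ((Submodule.Quotient.eq C).mp hq)
  -- combinatorial count
  have hnK : 4 * D * K ≤ n := hn
  have hcount : (n - 2 * K) ^ D * (2 ^ m * (D.choose m * K.choose m)) ≤
      2 * 2 ^ (n ^ D - Module.finrank (ZMod 2) C) := by
    have hq := Stmt12.QSet_card n K m D
    have e1 : n - K - K = n - 2 * K := by omega
    have e2 : (n - 2 * K) ^ D * (2 ^ m * (D.choose m * K.choose m))
        = (n - K - K) ^ D * ((D.choose m * 2 ^ m) * K.choose m) := by
      rw [e1]; ring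
    rw [e2, ← hq]
    calc (Stmt12.QSet n K m D).card ≤ 2 * F.card := hQF
      _ ≤ 2 * 2 ^ (n ^ D - Module.finrank (ZMod 2) C) := by omega
  have hc1 : 1 ≤ D.choose m * K.choose m :=
    Nat.one_le_iff_ne_zero.mpr (Nat.mul_ne_zero
      (Nat.pos_iff_ne_zero.mp (Nat.choose_pos (by omega)))
      (Nat.pos_iff_ne_zero.mp (Nat.choose_pos (by omega))))
  have hfinal := Stmt12.final n D K m (n ^ D - Module.finrank (ZMod 2) C)
    (D.choose m * K.choose m) hD hK hnK hc1 hcount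
  have hcast : (n : ℝ) ^ D - (Module.finrank (ZMod 2) C : ℝ)
      = ((n ^ D - Module.finrank (ZMod 2) C : ℕ) : ℝ) := by
    rw [Nat.cast_sub hfr_le]
    push_cast
    ring
  have hbR : ((K : ℕ) : ℝ) = (b : ℝ) - 1 := by
    rw [hK_def]
    push_cast [Nat.cast_sub (by omega : 1 ≤ b)]
    ring
  constructor
  · intro hcase
    have hmK : m = K := by omega
    rw [hcast]
    have : Real.logb 2 ((D.choose m * K.choose m : ℕ) : ℝ)
        = Real.logb 2 ((D.choose K : ℕ) : ℝ) := by
      rw [hmK, Nat.choose_self, Nat.mul_one]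
    rw [this, hmK, hbR] at hfinal
    exact le_trans (by linarith) hfinal
  · intro hcase
    have hmD : m = D := by omega
    rw [hcast]
    have : Real.logb 2 ((D.choose m * K.choose m : ℕ) : ℝ)
        = Real.logb 2 ((K.choose D : ℕ) : ℝ) := by
      rw [hmD, Nat.choose_self, Nat.one_mul]
    rw [this, hmD] at hfinal
    exact le_trans (by linarith) hfinal
end

section
/- For integers n ≥ b ≥ 2 and D ≥ 1 with N = n^D, the number of 2-weight-limited b-bursts in the straight model satisfies |E_str(b,N)| ≥ ((b-1)/2)·D·n^D. -/
/-- auxiliary step function: for a position `a` and an index `d`, produce a partner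
position at distance between `1` and `d+1`. -/
def gval (a d : ℕ) : ℕ := if d < a then a - (d + 1) else d + 1

lemma gval_lt {n b a d : ℕ} (hn : b ≤ n) (ha : a < n) (hd : d < b - 1) :
    gval a d < n := by
  unfold gval; split_ifs <;> omega

lemma gval_ne (a d : ℕ) : gval a d ≠ a := by
  unfold gval; split_ifs <;> omega

lemma gval_dist {b a d : ℕ} (hd : d < b - 1) (hb : 2 ≤ b) :
    |((gval a d : ℕ) : ℤ) - (a : ℤ)| ≤ (b : ℤ) - 1 := by
  unfold gval; split_ifs <;> rw [abs_le] <;> omega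

lemma gval_inj (a : ℕ) {d d' : ℕ} (h : gval a d = gval a d') : d = d' := by
  unfold gval at h; split_ifs at h <;> omega

/-- the indicator vector of the pair `{x, update x t a}`. -/
def burstFun (n D : ℕ) (p : Fin D × (Fin D → Fin n) × Fin n) : (Fin D → Fin n) → ZMod 2 :=
  fun z => if z = p.2.1 ∨ z = Function.update p.2.1 p.1 p.2.2 then 1 else 0

/-- For integers `n ≥ b ≥ 2` and `D ≥ 1`, the number of 2-weight-limited `b`-bursts
in the straight model on `[n]^D` (binary vectors of Hamming weight at most 2 whose two
support positions, if distinct, lie on an axis-parallel line at distance `< b`)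
satisfies `|E_str(b,N)| ≥ ((b-1)/2) D n^D`. -/
theorem stmt_14 (n b D : ℕ) (hb : 2 ≤ b) (hn : b ≤ n) (hD : 1 ≤ D) :
    (Nat.card {e : (Fin D → Fin n) → ZMod 2 |
        (Finset.univ.filter (fun i => e i ≠ 0)).card ≤ 2 ∧
        ∀ i ∈ Finset.univ.filter (fun i => e i ≠ 0),
          ∀ j ∈ Finset.univ.filter (fun i => e i ≠ 0), i ≠ j →
            ∃ t, i t ≠ j t ∧ (∀ t', t' ≠ t → i t' = j t') ∧
              |((i t : ℕ) : ℤ) - ((j t : ℕ) : ℤ)| ≤ (b : ℤ) - 1} : ℚ)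
      ≥ (((b : ℚ) - 1) / 2) * D * (n : ℚ) ^ D := by
  classical
  set S : Set ((Fin D → Fin n) → ZMod 2) := {e : (Fin D → Fin n) → ZMod 2 |
        (Finset.univ.filter (fun i => e i ≠ 0)).card ≤ 2 ∧
        ∀ i ∈ Finset.univ.filter (fun i => e i ≠ 0),
          ∀ j ∈ Finset.univ.filter (fun i => e i ≠ 0), i ≠ j →
            ∃ t, i t ≠ j t ∧ (∀ t', t' ≠ t → i t' = j t') ∧
              |((i t : ℕ) : ℤ) - ((j t : ℕ) : ℤ)| ≤ (b : ℤ) - 1} with hS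
  set A : Finset (Fin D × (Fin D → Fin n) × Fin n) :=
    Finset.univ.filter (fun p => p.2.2 ≠ p.2.1 p.1 ∧
      |((p.2.2 : ℕ) : ℤ) - ((p.2.1 p.1 : ℕ) : ℤ)| ≤ (b : ℤ) - 1) with hA
  set f := burstFun n D with hf
  -- every element of `A` maps into `S`
  have hmem : ∀ p ∈ A, f p ∈ S := by
    rintro ⟨t, x, a⟩ hp
    rw [hA, Finset.mem_filter] at hp
    obtain ⟨-, ha, hdist⟩ := hp
    set y := Function.update x t a with hy
    have hyt : y t = a := Function.update_self t a x
    have hsupp : (Finset.univ.filter (fun i => f (t, x, a) i ≠ 0)) = {x, y} := by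
      ext i
      by_cases h : i = x ∨ i = y <;>
        simp [hf, burstFun, ← hy, h, Finset.mem_insert, Finset.mem_singleton] <;> tauto
    rw [hS]
    constructor
    · rw [hsupp]
      exact (Finset.card_insert_le _ _).trans (by simp)
    · intro i hi j hj hij
      rw [hsupp] at hi hj
      simp only [Finset.mem_insert, Finset.mem_singleton] at hi hj
      have key : ∀ u v : Fin D → Fin n, u = x → v = y →
          ∃ t0, u t0 ≠ v t0 ∧ (∀ t', t' ≠ t0 → u t' = v t') ∧
            |((u t0 : ℕ) : ℤ) - ((v t0 : ℕ) : ℤ)| ≤ (b : ℤ) - 1 := by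
        rintro u v rfl rfl
        refine ⟨t, ?_, ?_, ?_⟩
        · rw [hyt]; exact fun h => ha h.symm
        · intro t' ht'; rw [hy, Function.update_of_ne ht']
        · rw [hyt, abs_sub_comm]; exact hdist
      rcases hi with rfl | rfl <;> rcases hj with rfl | rfl
      · exact absurd rfl hij
      · exact key _ _ rfl rfl
      · obtain ⟨t0, h1, h2, h3⟩ := key _ _ rfl rfl
        exact ⟨t0, Ne.symm h1, fun t' ht' => (h2 t' ht').symm,
          by rw [abs_sub_comm]; exact h3⟩
      · exact absurd rfl hij
  -- fibers of `f` on `A` have size at most 2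
  have hfib : ∀ p ∈ A, ∀ q ∈ A, f q = f p →
      q = p ∨ q = (p.1, Function.update p.2.1 p.1 p.2.2, p.2.1 p.1) := by
    rintro ⟨t, x, a⟩ hp ⟨t', x', a'⟩ hq hfq
    rw [hA, Finset.mem_filter] at hp hq
    obtain ⟨-, ha, -⟩ := hp
    obtain ⟨-, ha', -⟩ := hq
    have hone : (1 : ZMod 2) ≠ 0 := one_ne_zero
    have hiff : ∀ z, (z = x' ∨ z = Function.update x' t' a') ↔
        (z = x ∨ z = Function.update x t a) := by
      intro z
      have h := congrFun hfq z
      simp only [hf, burstFun] at h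
      split_ifs at h <;> tauto
    have hyx : Function.update x t a ≠ x := by
      intro h
      have := congrFun h t
      rw [Function.update_self] at this
      exact ha this
    have hy'x' : Function.update x' t' a' ≠ x' := by
      intro h
      have := congrFun h t'
      rw [Function.update_self] at this
      exact ha' this
    have h1 := (hiff x').mp (Or.inl rfl)
    have h2 := (hiff (Function.update x' t' a')).mp (Or.inr rfl)
    have h3 := (hiff x).mpr (Or.inl rfl)
    rcases h1 with h1 | h1
    · -- x' = x
      have hy'y : Function.update x' t' a' = Function.update x t a := by
        rcases h2 with h2 | h2
        · exact absurd (h2.trans h1.symm) hy'x'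
        · exact h2
      have htt : t' = t := by
        by_contra hne
        have hv := congrFun hy'y t'
        rw [Function.update_self, Function.update_of_ne hne] at hv
        exact ha' (hv.trans (congrFun h1 t').symm)
      subst htt
      have haa : a' = a := by
        have hv := congrFun hy'y t'
        rw [Function.update_self, Function.update_self] at hv
        exact hv
      subst haa; rw [h1]; left; rfl
    · -- x' = update x t a
      have hx : x = Function.update x' t' a' := by
        rcases h3 with h3 | h3
        · exact absurd (h3.trans h1) (Ne.symm hyx)
        · exact h3
      have htt : t' = t := by
        by_contra hne
        have hv := congrFun hx t'
        rw [Function.update_self] at hv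
        have hv2 := congrFun h1 t'
        rw [Function.update_of_ne hne] at hv2
        exact ha' (hv.symm.trans (hv2.symm ▸ rfl))
      subst htt
      have haa : a' = x t' := by
        have hv := congrFun hx t'
        rw [Function.update_self] at hv
        exact hv.symm
      right
      rw [h1, haa]
  -- hence #A ≤ 2 * #(image)
  have hA2 : A.card ≤ 2 * (A.image f).card := by
    refine Finset.card_le_mul_card_image A 2 ?_
    intro e he
    obtain ⟨p, hp, rfl⟩ := Finset.mem_image.mp he
    have hsub : A.filter (fun q => f q = f p) ⊆
        {p, (p.1, Function.update p.2.1 p.1 p.2.2, p.2.1 p.1)} := by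
      intro q hq
      rw [Finset.mem_filter] at hq
      rcases hfib p hp q hq.1 hq.2 with h | h <;> simp [h]
    exact (Finset.card_le_card hsub).trans
      ((Finset.card_insert_le _ _).trans (by simp))
  -- the image lies in S
  have h5 : (A.image f).card ≤ Nat.card S := by
    have himgS : ((A.image f : Finset _) : Set _) ⊆ S := by
      intro e he
      simp only [Finset.coe_image, Set.mem_image, Finset.mem_coe] at he
      obtain ⟨p, hp, rfl⟩ := he
      exact hmem p hp
    rw [Nat.card_coe_set_eq, ← Set.ncard_coe_finset]
    exact Set.ncard_le_ncard himgS (Set.toFinite S)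
  -- lower bound #A by injecting the full product
  have hBA : D * (n ^ D * (b - 1)) ≤ A.card := by
    have hnpos : 0 < n := by omega
    have hG : ∀ p : Fin D × (Fin D → Fin n) × Fin (b - 1),
        gval ((p.2.1 p.1 : ℕ)) (p.2.2 : ℕ) < n :=
      fun p => gval_lt hn (p.2.1 p.1).isLt p.2.2.isLt
    have hcard := Finset.card_le_card_of_injOn
      (f := fun p : Fin D × (Fin D → Fin n) × Fin (b - 1) =>
        (p.1, p.2.1, (⟨gval ((p.2.1 p.1 : ℕ)) (p.2.2 : ℕ), hG p⟩ : Fin n)))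
      (s := Finset.univ) (t := A) ?_ ?_
    · calc D * (n ^ D * (b - 1))
          = (Finset.univ : Finset (Fin D × (Fin D → Fin n) × Fin (b - 1))).card := by
            simp [Fintype.card_fun]
        _ ≤ A.card := hcard
    · rintro ⟨t, x, d⟩ -
      rw [hA, Finset.mem_coe, Finset.mem_filter]
      refine ⟨Finset.mem_univ _, ?_, ?_⟩
      · exact Fin.ne_of_val_ne (gval_ne _ _)
      · exact gval_dist d.isLt hb
    · rintro ⟨t, x, d⟩ - ⟨t', x', d'⟩ - h
      simp only [Prod.mk.injEq, Fin.mk.injEq] at h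
      obtain ⟨rfl, rfl, hv⟩ := h
      have hdd : d = d' := Fin.ext (gval_inj _ hv)
      rw [hdd]
  -- combine
  have hnat : D * (n ^ D * (b - 1)) ≤ 2 * Nat.card S :=
    hBA.trans (hA2.trans (by omega))
  have hq : ((D : ℚ)) * ((n : ℚ) ^ D * ((b : ℚ) - 1)) ≤ 2 * (Nat.card S : ℚ) := by
    have := (Nat.cast_le (α := ℚ)).mpr hnat
    push_cast [Nat.cast_sub (show 1 ≤ b by omega)] at this
    convert this using 2 <;> push_cast <;> ring_nf
  rw [ge_iff_le]
  nlinarith [hq]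
end

section
/- Let D ≥ 1 and n ≥ b ≥ 2, and let C ⊆ F_2^N, N = n^D, be a linear code correcting every 2-weight-limited b-burst in the straight model. Then its excess redundancy satisfies ξ(C) ≥ log₂(b-1) + log₂ D - 2. Moreover, if n ≥ D(b²-b)/2, then ξ(C) ≥ log₂(b-1) + log₂ D - 1. -/
namespace Stmt15Aux

open Finset

variable {n D : ℕ}

/-- Indicator vector of a single position. -/
def sgl (x : Fin D → Fin n) : (Fin D → Fin n) → ZMod 2 :=
  fun i => if i = x then 1 else 0

lemma supp_sgl (x : Fin D → Fin n) :
    Finset.univ.filter (fun i => sgl x i ≠ 0) = {x} := by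
  ext i
  by_cases h : i = x <;> simp [sgl, h]

lemma sgl_injective : Function.Injective (sgl (n := n) (D := D)) := by
  intro x y h
  have := congrArg (fun e => Finset.univ.filter (fun i => e i ≠ 0)) h
  simpa [supp_sgl] using this

lemma supp_pair {x y : Fin D → Fin n} (h : x ≠ y) :
    Finset.univ.filter (fun i => (sgl x + sgl y) i ≠ 0) = {x, y} := by
  ext i
  by_cases hx : i = x <;> by_cases hy : i = y
  · subst hx; exact absurd hy h
  · rw [Finset.mem_filter]; simp [sgl, hx, hy, Pi.add_apply, h, Ne.symm h]
  · rw [Finset.mem_filter]; simp [sgl, hx, hy, Pi.add_apply, h, Ne.symm h]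
  · rw [Finset.mem_filter]; simp [sgl, hx, hy, Pi.add_apply, h, Ne.symm h]

/-- The "goodness" predicate from the theorem statement. -/
def good (n b D : ℕ) (e : (Fin D → Fin n) → ZMod 2) : Prop :=
  (Finset.univ.filter (fun i => e i ≠ 0)).card ≤ 2 ∧
  ∀ i ∈ Finset.univ.filter (fun i => e i ≠ 0),
    ∀ j ∈ Finset.univ.filter (fun i => e i ≠ 0), i ≠ j →
      ∃ t, i t ≠ j t ∧ (∀ t', t' ≠ t → i t' = j t') ∧
        |((i t : ℕ) : ℤ) - ((j t : ℕ) : ℤ)| ≤ (b : ℤ) - 1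

lemma good_zero (b : ℕ) : good n b D 0 := by
  constructor
  · simp
  · intro i hi
    simp at hi

lemma good_sgl (b : ℕ) (x : Fin D → Fin n) : good n b D (sgl x) := by
  refine ⟨?_, ?_⟩
  · rw [supp_sgl]; simp
  · intro i hi j hj hij
    rw [supp_sgl] at hi hj
    simp only [Finset.mem_singleton] at hi hj
    exact absurd (hi.trans hj.symm) hij

/-- The point shifted by `c` in coordinate `t` (defined with `%` for totality). -/
def nxt (hn0 : 0 < n) (t : Fin D) (c : ℕ) (x : Fin D → Fin n) : Fin D → Fin n :=
  Function.update x t ⟨((x t : ℕ) + c) % n, Nat.mod_lt _ hn0⟩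

lemma nxt_self {hn0 : 0 < n} {t : Fin D} {c : ℕ} {x : Fin D → Fin n}
    (h : (x t : ℕ) + c < n) : ((nxt hn0 t c x) t : ℕ) = (x t : ℕ) + c := by
  simp [nxt, Nat.mod_eq_of_lt h]

lemma nxt_ne' {hn0 : 0 < n} {t : Fin D} {c : ℕ} {x : Fin D → Fin n} {j : Fin D}
    (hj : j ≠ t) : nxt hn0 t c x j = x j :=
  Function.update_of_ne hj _ _

lemma ne_nxt {hn0 : 0 < n} {t : Fin D} {c : ℕ} {x : Fin D → Fin n}
    (hc : 0 < c) (h : (x t : ℕ) + c < n) : x ≠ nxt hn0 t c x := by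
  intro he
  have h2 := congrArg (fun z : Fin D → Fin n => (z t : ℕ)) he
  simp only [nxt_self h] at h2
  omega

/-- The pair error vector. -/
def pv (hn0 : 0 < n) (t : Fin D) (c : ℕ) (x : Fin D → Fin n) :
    (Fin D → Fin n) → ZMod 2 :=
  sgl x + sgl (nxt hn0 t c x)

lemma supp_pv (hn0 : 0 < n) {t : Fin D} {c : ℕ} {x : Fin D → Fin n}
    (hc : 0 < c) (h : (x t : ℕ) + c < n) :
    Finset.univ.filter (fun i => pv hn0 t c x i ≠ 0) = {x, nxt hn0 t c x} :=
  supp_pair (ne_nxt hc h)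

lemma good_pv {b : ℕ} (hn0 : 0 < n) {t : Fin D} {c : ℕ} {x : Fin D → Fin n}
    (hc : 0 < c) (hcb : c ≤ b - 1) (hb : 2 ≤ b) (h : (x t : ℕ) + c < n) :
    good n b D (pv hn0 t c x) := by
  refine ⟨?_, ?_⟩
  · rw [supp_pv hn0 hc h]
    exact (Finset.card_insert_le _ _).trans (by simp)
  · intro i hi j hj hij
    rw [supp_pv hn0 hc h] at hi hj
    simp only [Finset.mem_insert, Finset.mem_singleton] at hi hj
    have hval : ((nxt hn0 t c x) t : ℕ) = (x t : ℕ) + c := nxt_self h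
    have hne_t : x t ≠ nxt hn0 t c x t := by
      intro hh
      have := congrArg Fin.val hh
      omega
    have hofft : ∀ t', t' ≠ t → x t' = nxt hn0 t c x t' :=
      fun t' h' => (nxt_ne' h').symm
    have habs : |((x t : ℕ) : ℤ) - (((nxt hn0 t c x) t : ℕ) : ℤ)| ≤ (b : ℤ) - 1 := by
      rw [hval]
      push_cast
      rw [show ((x t : ℕ) : ℤ) - (((x t : ℕ) : ℤ) + (c : ℤ)) = -(c : ℤ) by ring,
        abs_neg, abs_of_nonneg (by positivity)]
      omega
    rcases hi with rfl | rfl <;> rcases hj with rfl | rfl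
    · exact absurd rfl hij
    · exact ⟨t, hne_t, hofft, habs⟩
    · exact ⟨t, hne_t.symm, fun t' h' => (hofft t' h').symm, by rw [abs_sub_comm]; exact habs⟩
    · exact absurd rfl hij

lemma pv_inj (hn0 : 0 < n) {t t' : Fin D} {c c' : ℕ} {x x' : Fin D → Fin n}
    (hc : 0 < c) (hc' : 0 < c') (h : (x t : ℕ) + c < n) (h' : (x' t' : ℕ) + c' < n)
    (he : pv hn0 t c x = pv hn0 t' c' x') : t = t' ∧ c = c' ∧ x = x' := by
  set y := nxt hn0 t c x with hy
  set y' := nxt hn0 t' c' x' with hy'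
  have hxy : x ≠ y := ne_nxt hc h
  have hx'y' : x' ≠ y' := ne_nxt hc' h'
  have hsupp : ({x, y} : Finset (Fin D → Fin n)) = {x', y'} := by
    rw [← supp_pv hn0 hc h, ← supp_pv hn0 hc' h']
    exact congrArg (fun e => Finset.univ.filter (fun i => e i ≠ 0)) he
  have hv : (y t : ℕ) = (x t : ℕ) + c := nxt_self h
  have hv' : (y' t' : ℕ) = (x' t' : ℕ) + c' := nxt_self h'
  have hxm : x = x' ∨ x = y' := by
    have : x ∈ ({x', y'} : Finset (Fin D → Fin n)) := by
      rw [← hsupp]; simp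
    simpa using this
  have hym : y = x' ∨ y = y' := by
    have : y ∈ ({x', y'} : Finset (Fin D → Fin n)) := by
      rw [← hsupp]; simp
    simpa using this
  have hx'm : x' = x ∨ x' = y := by
    have : x' ∈ ({x, y} : Finset (Fin D → Fin n)) := by
      rw [hsupp]; simp
    simpa using this
  have hxx' : x = x' := by
    rcases hxm with h1 | h1
    · exact h1
    · exfalso
      rcases hx'm with h2 | h2
      · rcases hym with h3 | h3
        · exact hxy (h3.trans h2).symm
        · exact hxy (h1.trans h3.symm)
      · -- x = y' and x' = y : the crossed case
        by_cases htt : t' = t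
        · subst htt
          have e1 : (x t' : ℕ) = (y' t' : ℕ) := congrArg (fun z : Fin D → Fin n => (z t' : ℕ)) h1
          have e2 : (x' t' : ℕ) = (y t' : ℕ) := congrArg (fun z : Fin D → Fin n => (z t' : ℕ)) h2
          omega
        · have e1 : (y t' : ℕ) = (x t' : ℕ) := congrArg Fin.val (nxt_ne' htt)
          have e2 : (x t' : ℕ) = (y' t' : ℕ) := congrArg (fun z : Fin D → Fin n => (z t' : ℕ)) h1
          have e3 : (x' t' : ℕ) = (y t' : ℕ) := congrArg (fun z : Fin D → Fin n => (z t' : ℕ)) h2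
          omega
  have hyy' : y = y' := by
    rcases hym with h3 | h3
    · exact absurd (hxx'.trans h3.symm) hxy
    · exact h3
  have htt : t = t' := by
    by_contra htne
    have e1 : (y t' : ℕ) = (x t' : ℕ) := congrArg Fin.val (nxt_ne' (Ne.symm htne))
    have e2 : (y t' : ℕ) = (y' t' : ℕ) := congrArg (fun z : Fin D → Fin n => (z t' : ℕ)) hyy'
    have e3 : (x t' : ℕ) = (x' t' : ℕ) := congrArg (fun z : Fin D → Fin n => (z t' : ℕ)) hxx'
    omega
  refine ⟨htt, ?_, hxx'⟩
  subst htt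
  have e2 : (y t : ℕ) = (y' t : ℕ) := congrArg (fun z : Fin D → Fin n => (z t : ℕ)) hyy'
  have e3 : (x t : ℕ) = (x' t : ℕ) := congrArg (fun z : Fin D → Fin n => (z t : ℕ)) hxx'
  omega

/-- Cardinality of a single-coordinate constraint. -/
lemma card_filter_fin (m : ℕ) :
    (Finset.univ.filter (fun v : Fin n => (v : ℕ) + m < n)).card = n - m := by
  rcases le_or_gt n m with hnm | hnm
  · rw [Nat.sub_eq_zero_of_le hnm, Finset.card_eq_zero, Finset.filter_eq_empty_iff]
    intro v _
    omega
  · have himg : (Finset.univ.filter (fun v : Fin n => (v : ℕ) + m < n)) =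
        Finset.univ.image (Fin.castLE (show n - m ≤ n by omega)) := by
      ext v
      simp only [Finset.mem_filter, Finset.mem_univ, true_and, Finset.mem_image]
      constructor
      · intro hv
        exact ⟨⟨(v : ℕ), by omega⟩, by ext; simp [Fin.castLE]⟩
      · rintro ⟨w, -, rfl⟩
        have := w.isLt
        simp only [Fin.coe_castLE]
        omega
    rw [himg, Finset.card_image_of_injective _ (Fin.castLE_injective _)]
    simp

lemma card_filter_coord (hD : 1 ≤ D) (t : Fin D) (m : ℕ) :
    (Finset.univ.filter (fun x : Fin D → Fin n => (x t : ℕ) + m < n)).card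
      = (n - m) * n ^ (D - 1) := by
  classical
  set s : Finset (Fin n) := Finset.univ.filter (fun v => (v : ℕ) + m < n) with hs
  have h1 : (Finset.univ.filter (fun x : Fin D → Fin n => (x t : ℕ) + m < n))
      = Fintype.piFinset (Function.update (fun _ : Fin D => (Finset.univ : Finset (Fin n))) t s) := by
    ext x
    simp only [Finset.mem_filter, Finset.mem_univ, true_and, Fintype.mem_piFinset]
    constructor
    · intro hx j
      rcases eq_or_ne j t with rfl | hj
      · simp [hs, hx]
      · simp [Function.update_of_ne hj]
    · intro hx
      have := hx t
      simpa [hs] using this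
  rw [h1, Fintype.card_piFinset]
  have h2 : ∀ j : Fin D,
      ((Function.update (fun _ : Fin D => (Finset.univ : Finset (Fin n))) t s) j).card
        = (Function.update (fun _ : Fin D => (Finset.univ : Finset (Fin n)).card) t s.card) j := by
    intro j
    rcases eq_or_ne j t with rfl | hj
    · simp
    · simp [Function.update_of_ne hj]
  rw [Finset.prod_congr rfl (fun j _ => h2 j),
    Finset.prod_update_of_mem (Finset.mem_univ t)]
  have h3 : (Finset.univ \ {t} : Finset (Fin D)).card = D - 1 := by
    rw [Finset.card_sdiff_of_subset (by simp)]
    simp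
  rw [Finset.prod_const, h3]
  have h4 : s.card = n - m := card_filter_fin m
  simp [h4]

/-- Gauss-type sum identity. -/
lemma gauss (nn : ℕ) : ∀ m, m ≤ nn →
    2 * (∑ d ∈ Finset.range m, (nn - (d + 1))) + m * (m + 1) = 2 * nn * m := by
  intro m
  induction m with
  | zero => intro _; simp
  | succ k ih =>
    intro h
    have ihh := ih (by omega)
    rw [Finset.sum_range_succ]
    have hk : k + 1 ≤ nn := h
    zify [hk] at ihh ⊢
    linear_combination ihh

section Pairs

variable (hn0 : 0 < n) (b : ℕ)

/-- Image of the pair construction for a fixed axis and difference. -/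
def pvF (td : Fin D × Fin (b - 1)) : Finset ((Fin D → Fin n) → ZMod 2) :=
  (Finset.univ.filter
      (fun x : Fin D → Fin n => (x td.1 : ℕ) + ((td.2 : ℕ) + 1) < n)).image
    (fun x => pv hn0 td.1 ((td.2 : ℕ) + 1) x)

lemma card_pvF (hD : 1 ≤ D) (td : Fin D × Fin (b - 1)) :
    (pvF hn0 b td).card = (n - ((td.2 : ℕ) + 1)) * n ^ (D - 1) := by
  rw [pvF, Finset.card_image_of_injOn, card_filter_coord hD]
  intro x hx x' hx' he
  simp only [Finset.coe_filter, Set.mem_setOf_eq, Finset.mem_univ, true_and] at hx hx'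
  exact (pv_inj hn0 (by omega) (by omega) hx hx' he).2.2

def pairSet : Finset ((Fin D → Fin n) → ZMod 2) :=
  Finset.univ.biUnion (pvF hn0 b)

lemma mem_pairSet_elim {e : (Fin D → Fin n) → ZMod 2} (he : e ∈ pairSet hn0 b) :
    ∃ (t : Fin D) (c : ℕ) (x : Fin D → Fin n),
      0 < c ∧ c ≤ b - 1 ∧ (x t : ℕ) + c < n ∧ e = pv hn0 t c x := by
  simp only [pairSet, Finset.mem_biUnion, Finset.mem_univ, true_and, pvF,
    Finset.mem_image, Finset.mem_filter] at he
  obtain ⟨td, x, hx, rfl⟩ := he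
  exact ⟨td.1, (td.2 : ℕ) + 1, x, by omega, by have := td.2.isLt; omega, by omega, rfl⟩

lemma card_pairSet (hD : 1 ≤ D) :
    (pairSet (D := D) hn0 b).card
      = D * ((∑ d ∈ Finset.range (b - 1), (n - (d + 1))) * n ^ (D - 1)) := by
  rw [pairSet, Finset.card_biUnion]
  · have h1 : ∀ td : Fin D × Fin (b - 1),
        (pvF hn0 b td).card = (n - ((td.2 : ℕ) + 1)) * n ^ (D - 1) :=
      card_pvF hn0 b hD
    rw [Finset.sum_congr rfl (fun td _ => h1 td), Fintype.sum_prod_type]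
    have hin : ∀ x : Fin D, (∑ y : Fin (b - 1), (n - ((y : ℕ) + 1)) * n ^ (D - 1))
        = (∑ d ∈ Finset.range (b - 1), (n - (d + 1))) * n ^ (D - 1) := by
      intro x
      calc (∑ y : Fin (b - 1), (n - ((y : ℕ) + 1)) * n ^ (D - 1))
          = ∑ d ∈ Finset.range (b - 1), (n - (d + 1)) * n ^ (D - 1) :=
            Fin.sum_univ_eq_sum_range (fun d => (n - (d + 1)) * n ^ (D - 1)) (b - 1)
        _ = (∑ d ∈ Finset.range (b - 1), (n - (d + 1))) * n ^ (D - 1) :=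
            (Finset.sum_mul _ _ _).symm
    rw [Finset.sum_congr rfl (fun x _ => hin x), Finset.sum_const, Finset.card_univ,
      Fintype.card_fin, smul_eq_mul]
  · intro td _ td' _ hne
    rw [Function.onFun, Finset.disjoint_left]
    intro e he he'
    simp only [pvF, Finset.mem_image, Finset.mem_filter, Finset.mem_univ, true_and] at he he'
    obtain ⟨x, hx, rfl⟩ := he
    obtain ⟨x', hx', heq⟩ := he'
    obtain ⟨h1, h2, h3⟩ := pv_inj hn0 (by omega) (by omega) hx hx' heq.symm
    apply hne
    have : (td.2 : ℕ) = (td'.2 : ℕ) := by omega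
    exact Prod.ext h1 (Fin.ext this)

end Pairs

end Stmt15Aux

open Stmt15Aux in
/-- Let `D ≥ 1`, `n ≥ b ≥ 2`, and let `C ⊆ F_2^N`, `N = n^D`, be a linear code
correcting every 2-weight-limited `b`-burst in the straight model (all such error
vectors lie in distinct cosets of `C`).  Then the excess redundancy
`ξ(C) = (N - dim C) - ⌈log₂ N⌉` satisfies `ξ(C) ≥ log₂(b-1) + log₂ D - 2`;
moreover if `n ≥ D(b²-b)/2` then `ξ(C) ≥ log₂(b-1) + log₂ D - 1`. -/
theorem stmt_15 (n b D : ℕ) (hb : 2 ≤ b) (hn : b ≤ n) (hD : 1 ≤ D)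
    (C : Submodule (ZMod 2) ((Fin D → Fin n) → ZMod 2))
    (hcorr : ∀ e₁ ∈ {e : (Fin D → Fin n) → ZMod 2 |
        (Finset.univ.filter (fun i => e i ≠ 0)).card ≤ 2 ∧
        ∀ i ∈ Finset.univ.filter (fun i => e i ≠ 0),
          ∀ j ∈ Finset.univ.filter (fun i => e i ≠ 0), i ≠ j →
            ∃ t, i t ≠ j t ∧ (∀ t', t' ≠ t → i t' = j t') ∧
              |((i t : ℕ) : ℤ) - ((j t : ℕ) : ℤ)| ≤ (b : ℤ) - 1},
      ∀ e₂ ∈ {e : (Fin D → Fin n) → ZMod 2 |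
        (Finset.univ.filter (fun i => e i ≠ 0)).card ≤ 2 ∧
        ∀ i ∈ Finset.univ.filter (fun i => e i ≠ 0),
          ∀ j ∈ Finset.univ.filter (fun i => e i ≠ 0), i ≠ j →
            ∃ t, i t ≠ j t ∧ (∀ t', t' ≠ t → i t' = j t') ∧
              |((i t : ℕ) : ℤ) - ((j t : ℕ) : ℤ)| ≤ (b : ℤ) - 1},
        e₁ ≠ e₂ → e₁ - e₂ ∉ C) :
    (((n : ℝ) ^ D - Module.finrank (ZMod 2) C) - (⌈Real.logb 2 ((n : ℝ) ^ D)⌉ : ℝ)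
        ≥ Real.logb 2 ((b : ℝ) - 1) + Real.logb 2 D - 2) ∧
    (D * (b ^ 2 - b) / 2 ≤ n →
      ((n : ℝ) ^ D - Module.finrank (ZMod 2) C) - (⌈Real.logb 2 ((n : ℝ) ^ D)⌉ : ℝ)
        ≥ Real.logb 2 ((b : ℝ) - 1) + Real.logb 2 D - 1) := by
  classical
  have hn0 : 0 < n := by omega
  -- the big finset of good error vectors
  set S : Finset ((Fin D → Fin n) → ZMod 2) :=
    pairSet (D := D) hn0 b ∪ (Finset.univ.image sgl ∪ {0}) with hS
  -- supports
  have hsupp_pair : ∀ e ∈ pairSet (D := D) hn0 b,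
      (Finset.univ.filter (fun i => e i ≠ 0)).card = 2 := by
    intro e he
    obtain ⟨t, c, x, hc, hcb, hlt, rfl⟩ := mem_pairSet_elim hn0 b he
    rw [supp_pv hn0 hc hlt, Finset.card_insert_of_notMem (by
      simp only [Finset.mem_singleton]; exact ne_nxt hc hlt), Finset.card_singleton]
  -- disjointness
  have hd2 : Disjoint (Finset.univ.image (sgl (n := n) (D := D)))
      ({0} : Finset ((Fin D → Fin n) → ZMod 2)) := by
    rw [Finset.disjoint_left]
    intro e he he0
    simp only [Finset.mem_image, Finset.mem_univ, true_and] at he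
    simp only [Finset.mem_singleton] at he0
    obtain ⟨x, rfl⟩ := he
    have := congrArg (fun e => Finset.univ.filter (fun i => e i ≠ 0)) he0
    simp [supp_sgl] at this
  have hd1 : Disjoint (pairSet (D := D) hn0 b)
      (Finset.univ.image sgl ∪ ({0} : Finset ((Fin D → Fin n) → ZMod 2))) := by
    rw [Finset.disjoint_left]
    intro e he he'
    have hcard2 := hsupp_pair e he
    rcases Finset.mem_union.mp he' with h | h
    · simp only [Finset.mem_image, Finset.mem_univ, true_and] at h
      obtain ⟨x, rfl⟩ := h
      rw [supp_sgl] at hcard2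
      simp at hcard2
    · simp only [Finset.mem_singleton] at h
      subst h
      simp at hcard2
  -- cardinality of S
  have hcardX : Fintype.card (Fin D → Fin n) = n ^ D := by
    simp [Fintype.card_fun]
  have hScard : S.card = (pairSet (D := D) hn0 b).card + (n ^ D + 1) := by
    rw [hS, Finset.card_union_of_disjoint hd1, Finset.card_union_of_disjoint hd2,
      Finset.card_image_of_injective _ sgl_injective, Finset.card_univ, hcardX,
      Finset.card_singleton]
  -- all elements of S are good
  have hSgood : ∀ e ∈ S, good n b D e := by
    intro e he
    rcases Finset.mem_union.mp he with h | h
    · obtain ⟨t, c, x, hc, hcb, hlt, rfl⟩ := mem_pairSet_elim hn0 b h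
      exact good_pv hn0 hc hcb hb hlt
    · rcases Finset.mem_union.mp h with h' | h'
      · simp only [Finset.mem_image, Finset.mem_univ, true_and] at h'
        obtain ⟨x, rfl⟩ := h'
        exact good_sgl b x
      · simp only [Finset.mem_singleton] at h'
        subst h'
        exact good_zero b
  -- injection into the quotient
  haveI : Finite (((Fin D → Fin n) → ZMod 2) ⧸ C) :=
    Finite.of_surjective _ (Submodule.Quotient.mk_surjective C)
  letI : Fintype (((Fin D → Fin n) → ZMod 2) ⧸ C) := Fintype.ofFinite _
  have hinj : Set.InjOn (fun e => Submodule.Quotient.mk (p := C) e) S := by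
    intro e₁ h1 e₂ h2 he
    by_contra hne
    exact hcorr e₁ (hSgood e₁ h1) e₂ (hSgood e₂ h2) hne ((Submodule.Quotient.eq C).mp he)
  have hcard_le : S.card ≤ Fintype.card (((Fin D → Fin n) → ZMod 2) ⧸ C) := by
    rw [← Finset.card_univ]
    exact Finset.card_le_card_of_injOn _ (fun a _ => Finset.mem_univ _) hinj
  -- dimension bookkeeping
  have hrankV : Module.finrank (ZMod 2) ((Fin D → Fin n) → ZMod 2) = n ^ D := by
    rw [Module.finrank_fintype_fun_eq_card, hcardX]
  have hq : Fintype.card (((Fin D → Fin n) → ZMod 2) ⧸ C)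
      = 2 ^ (n ^ D - Module.finrank (ZMod 2) C) := by
    rw [Module.card_eq_pow_finrank (K := ZMod 2), ZMod.card]
    congr 1
    have h1 := Submodule.finrank_quotient_add_finrank C
    rw [hrankV] at h1
    omega
  set k := Module.finrank (ZMod 2) C with hk
  have hkle : k ≤ n ^ D := by
    have := Submodule.finrank_le C
    rw [hrankV] at this
    exact this
  set r := n ^ D - k with hr
  have hSle : S.card ≤ 2 ^ r := by
    rw [← hq]
    exact hcard_le
  -- counting
  set A := ∑ d ∈ Finset.range (b - 1), (n - (d + 1)) with hA
  have hgauss : 2 * A + (b - 1) * b = 2 * n * (b - 1) := by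
    have := gauss n (b - 1) (by omega)
    have hb1 : b - 1 + 1 = b := by omega
    rw [hb1] at this
    exact this
  have hcard_pair : (pairSet (D := D) hn0 b).card = D * (A * n ^ (D - 1)) :=
    card_pairSet (D := D) hn0 b hD
  have hpow : n ^ (D - 1) * n = n ^ D := by
    rw [← pow_succ]
    congr 1
    omega
  -- part 1 in ℕ : (b-1) * (D * n^D) ≤ 2 ^ (r + 1)
  have h2A : n * (b - 1) ≤ 2 * A := by
    have hmul : b * (b - 1) ≤ n * (b - 1) := Nat.mul_le_mul_right _ hn
    nlinarith [hgauss, hmul]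
  have part1nat : (b - 1) * (D * n ^ D) ≤ 2 ^ (r + 1) := by
    have step1 : (b - 1) * (D * n ^ D) ≤ D * ((2 * A) * n ^ (D - 1)) := by
      calc (b - 1) * (D * n ^ D) = D * ((n * (b - 1)) * n ^ (D - 1)) := by
            rw [← hpow]; ring
        _ ≤ D * ((2 * A) * n ^ (D - 1)) := by
            exact Nat.mul_le_mul_left _ (Nat.mul_le_mul_right _ h2A)
    have step2 : D * ((2 * A) * n ^ (D - 1)) = 2 * (pairSet (D := D) hn0 b).card := by
      rw [hcard_pair]; ring
    have step3 : (pairSet (D := D) hn0 b).card ≤ S.card := by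
      apply Finset.card_le_card
      rw [hS]
      exact Finset.subset_union_left
    calc (b - 1) * (D * n ^ D) ≤ 2 * (pairSet (D := D) hn0 b).card := by omega
      _ ≤ 2 * S.card := by omega
      _ ≤ 2 * 2 ^ r := by omega
      _ = 2 ^ (r + 1) := by rw [pow_succ]; ring
  -- the logarithm bridge
  have key : ∀ e : ℕ, (b - 1) * (D * n ^ D) ≤ 2 ^ e →
      Real.logb 2 ((b : ℝ) - 1) + Real.logb 2 D + Real.logb 2 ((n : ℝ) ^ D) ≤ (e : ℝ) := by
    intro e he
    have hb1R : (1 : ℝ) ≤ (b : ℝ) - 1 := by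
      have : (2 : ℝ) ≤ (b : ℝ) := by exact_mod_cast hb
      linarith
    have hDR : (1 : ℝ) ≤ (D : ℝ) := by exact_mod_cast hD
    have hnR : (1 : ℝ) ≤ (n : ℝ) := by
      have : (1 : ℕ) ≤ n := by omega
      exact_mod_cast this
    have hnDR : (1 : ℝ) ≤ (n : ℝ) ^ D := one_le_pow₀ hnR
    have hle : ((b : ℝ) - 1) * ((D : ℝ) * (n : ℝ) ^ D) ≤ (2 : ℝ) ^ e := by
      have h1 : (((b - 1) * (D * n ^ D) : ℕ) : ℝ) ≤ ((2 ^ e : ℕ) : ℝ) := by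
        exact_mod_cast he
      have h2 : (((b - 1) * (D * n ^ D) : ℕ) : ℝ) = ((b : ℝ) - 1) * ((D : ℝ) * (n : ℝ) ^ D) := by
        push_cast [Nat.cast_sub (show 1 ≤ b by omega)]
        ring
      rw [h2] at h1
      push_cast at h1
      exact h1
    have hprodpos : (0 : ℝ) < ((b : ℝ) - 1) * ((D : ℝ) * (n : ℝ) ^ D) := by
      positivity
    calc Real.logb 2 ((b : ℝ) - 1) + Real.logb 2 D + Real.logb 2 ((n : ℝ) ^ D)
        = Real.logb 2 (((b : ℝ) - 1) * ((D : ℝ) * (n : ℝ) ^ D)) := by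
          rw [Real.logb_mul (by positivity) (by positivity),
            Real.logb_mul (by positivity) (by positivity)]
          ring
      _ ≤ Real.logb 2 ((2 : ℝ) ^ e) :=
          Real.logb_le_logb_of_le (by norm_num) hprodpos hle
      _ = (e : ℝ) := by
          rw [Real.logb_pow]
          simp [Real.logb_self_eq_one]
  have hceil : (⌈Real.logb 2 ((n : ℝ) ^ D)⌉ : ℝ) < Real.logb 2 ((n : ℝ) ^ D) + 1 :=
    Int.ceil_lt_add_one _
  have hcast : ((n : ℝ)) ^ D - (k : ℝ) = (r : ℝ) := by
    rw [hr]
    push_cast [Nat.cast_sub hkle]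
    ring
  constructor
  · have h1 := key (r + 1) part1nat
    push_cast at h1
    rw [ge_iff_le]
    linarith [hceil, h1, hcast]
  · intro hcond
    -- D * b * (b-1) ≤ 2 * n
    have hcond' : D * (b * (b - 1)) ≤ 2 * n := by
      obtain ⟨w, hw⟩ : ∃ w, b * (b - 1) = 2 * w := by
        have h := Nat.even_mul_succ_self (b - 1)
        have hb1 : b - 1 + 1 = b := by omega
        rw [hb1] at h
        obtain ⟨w, hw⟩ := h
        exact ⟨w, by rw [Nat.mul_comm]; omega⟩
      have h3 : b * b = b * (b - 1) + b := by
        nth_rewrite 2 [show b = (b - 1) + 1 by omega]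
        rw [Nat.mul_succ]
      have h1 : b ^ 2 - b = 2 * w := by
        rw [sq]
        omega
      have h5 : D * (b ^ 2 - b) = 2 * (D * w) := by rw [h1]; ring
      have h6 : D * w ≤ n := by
        have h8 := hcond
        rw [h5, Nat.mul_div_cancel_left _ (by norm_num : 0 < 2)] at h8
        exact h8
      have h7 : D * (b * (b - 1)) = 2 * (D * w) := by rw [hw]; ring
      calc D * (b * (b - 1)) = 2 * (D * w) := h7
        _ ≤ 2 * n := Nat.mul_le_mul le_rfl h6
    -- part 2 in ℕ : (b-1) * (D * n^D) ≤ 2 ^ r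
    have part2nat : (b - 1) * (D * n ^ D) ≤ 2 ^ r := by
      have hmulpow : D * (b * (b - 1)) * n ^ (D - 1) ≤ 2 * n * n ^ (D - 1) :=
        Nat.mul_le_mul_right _ hcond'
      have hgauss' : D * (2 * A) * n ^ (D - 1) + D * ((b - 1) * b) * n ^ (D - 1)
          = D * (2 * n * (b - 1)) * n ^ (D - 1) := by
        have := congrArg (fun z => D * z * n ^ (D - 1)) hgauss
        simpa [Nat.mul_add, Nat.add_mul] using this
      have htarget : 2 * ((b - 1) * (D * n ^ D)) ≤ 2 * S.card := by
        have e1 : 2 * ((b - 1) * (D * n ^ D)) = D * (2 * n * (b - 1)) * n ^ (D - 1) := by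
          rw [← hpow]; ring
        have e2 : 2 * S.card = D * (2 * A) * n ^ (D - 1) + 2 * n ^ D + 2 := by
          rw [hScard, hcard_pair]; ring
        have e3 : D * ((b - 1) * b) * n ^ (D - 1) ≤ 2 * n ^ D := by
          calc D * ((b - 1) * b) * n ^ (D - 1) = D * (b * (b - 1)) * n ^ (D - 1) := by ring
            _ ≤ 2 * n * n ^ (D - 1) := hmulpow
            _ = 2 * n ^ D := by rw [← hpow]; ring
        omega
      have : (b - 1) * (D * n ^ D) ≤ S.card := by omega
      exact this.trans hSle
    have h1 := key r part2nat
    rw [ge_iff_le]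
    linarith [hceil, h1, hcast]
end
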